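/- arXiv:2311.08366 — 7 statements merged into one kernel-verified Lean document; each statement's English description precedes it below -/
import Mathlib

section
/- Let A be an n×n real matrix, B an m×m real matrix, C an n×m real matrix, and s ∈ ℝ. Then the matrix exponential of s times the (n+m)×(n+m) block matrix with blocks (−A, C; 0, −B) equals the block matrix whose top-left block is exp(−sA), whose top-right block is exp(−sA)·(∫₀ˢ exp(uA)·C·exp(−uB) du), whose bottom-left block is 0, and whose bottom-right block is exp(−sB). -/
open scoped Matrix

open NormedSpace

/-- For an `n×n` matrix `A`, an `m×m` matrix `B`, an `n×m` matrix `C` and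
`s : ℝ`, the matrix exponential of `s` times the block matrix `(-A, C; 0, -B)` is the block
matrix with blocks `exp (-sA)`, `exp (-sA) * ∫₀ˢ exp (uA) C exp (-uB) du`, `0`, `exp (-sB)`,
where the integral is taken entrywise. -/
theorem matrix_exp_block_triangular_integral_upper
    (n m : ℕ) (A : Matrix (Fin n) (Fin n) ℝ) (B : Matrix (Fin m) (Fin m) ℝ)
    (C : Matrix (Fin n) (Fin m) ℝ) (s : ℝ) :
    NormedSpace.exp (s • Matrix.fromBlocks (-A) C 0 (-B)) =
      Matrix.fromBlocks
        (NormedSpace.exp (-(s • A)))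
        (NormedSpace.exp (-(s • A)) *
          Matrix.of (fun i j =>
            ∫ u in (0:ℝ)..s,
              (NormedSpace.exp (u • A) * C * NormedSpace.exp (-(u • B))) i j))
        0
        (NormedSpace.exp (-(s • B))) := by
  -- set up norm instances (all with topology defeq to the product topology)
  letI : NormedRing (Matrix (Fin n) (Fin n) ℝ) := Matrix.linftyOpNormedRing
  letI : NormedAlgebra ℝ (Matrix (Fin n) (Fin n) ℝ) := Matrix.linftyOpNormedAlgebra
  letI : NormedRing (Matrix (Fin m) (Fin m) ℝ) := Matrix.linftyOpNormedRing
  letI : NormedAlgebra ℝ (Matrix (Fin m) (Fin m) ℝ) := Matrix.linftyOpNormedAlgebra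
  letI : NormedAddCommGroup (Matrix (Fin n) (Fin m) ℝ) := Matrix.linftyOpNormedAddCommGroup
  letI : NormedSpace ℝ (Matrix (Fin n) (Fin m) ℝ) := Matrix.linftyOpNormedSpace
  letI : NormedRing (Matrix (Fin n ⊕ Fin m) (Fin n ⊕ Fin m) ℝ) := Matrix.linftyOpNormedRing
  letI : NormedAlgebra ℝ (Matrix (Fin n ⊕ Fin m) (Fin n ⊕ Fin m) ℝ) :=
    Matrix.linftyOpNormedAlgebra
  haveI : CompleteSpace (Matrix (Fin n) (Fin n) ℝ) := FiniteDimensional.complete ℝ _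
  haveI : CompleteSpace (Matrix (Fin m) (Fin m) ℝ) := FiniteDimensional.complete ℝ _
  haveI : CompleteSpace (Matrix (Fin n) (Fin m) ℝ) := FiniteDimensional.complete ℝ _
  haveI : CompleteSpace (Matrix (Fin n ⊕ Fin m) (Fin n ⊕ Fin m) ℝ) :=
    FiniteDimensional.complete ℝ _
  set M : Matrix (Fin n ⊕ Fin m) (Fin n ⊕ Fin m) ℝ := Matrix.fromBlocks (-A) C 0 (-B) with hM
  -- the integrand
  set f : ℝ → Matrix (Fin n) (Fin m) ℝ :=
    fun u => exp (u • A) * C * exp (-(u • B)) with hf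
  -- basic derivatives
  have hWder : ∀ t : ℝ, HasDerivAt (fun u : ℝ => exp (-(u • A))) ((-A) * exp (-(t • A))) t := by
    intro t
    have := hasDerivAt_exp_smul_const' (𝕂 := ℝ) (-A) t
    simp only [smul_neg, neg_mul] at this ⊢
    exact this
  have hZder : ∀ t : ℝ, HasDerivAt (fun u : ℝ => exp (-(u • B))) ((-B) * exp (-(t • B))) t := by
    intro t
    have := hasDerivAt_exp_smul_const' (𝕂 := ℝ) (-B) t
    simp only [smul_neg, neg_mul] at this ⊢
    exact this
  have hMder : ∀ t : ℝ,
      HasDerivAt (fun u : ℝ => exp (-(u • M))) ((-M) * exp (-(t • M))) t := by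
    intro t
    have := hasDerivAt_exp_smul_const' (𝕂 := ℝ) (-M) t
    simp only [smul_neg, neg_mul] at this ⊢
    exact this
  -- continuity of the integrand
  have hcont : Continuous f := by
    have h1 : Continuous fun u : ℝ => exp (u • A) :=
      continuous_iff_continuousAt.2 fun t =>
        (hasDerivAt_exp_smul_const (𝕂 := ℝ) A t).continuousAt
    have h2 : Continuous fun u : ℝ => exp (-(u • B)) :=
      continuous_iff_continuousAt.2 fun t => (hZder t).continuousAt
    exact (h1.matrix_mul continuous_const).matrix_mul h2
  -- the (Bochner) integral function
  set X : ℝ → Matrix (Fin n) (Fin m) ℝ := fun t => ∫ u in (0:ℝ)..t, f u with hX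
  have hXder : ∀ t : ℝ, HasDerivAt X (f t) t := by
    intro t
    haveI : TopologicalSpace.PseudoMetrizableSpace (Matrix (Fin n) (Fin m) ℝ) :=
      inferInstanceAs (TopologicalSpace.PseudoMetrizableSpace (Fin n → Fin m → ℝ))
    exact intervalIntegral.integral_hasDerivAt_right
      (hcont.intervalIntegrable _ _)
      (hcont.stronglyMeasurableAtFilter _ _)
      hcont.continuousAt
  -- multiplication as a continuous linear map (heterogeneous sizes)
  let mulL : Matrix (Fin n) (Fin n) ℝ →ₗ[ℝ]
      (Matrix (Fin n) (Fin m) ℝ →L[ℝ] Matrix (Fin n) (Fin m) ℝ) :=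
    { toFun := fun P => LinearMap.toContinuousLinearMap
        { toFun := fun Y => P * Y
          map_add' := fun Y Z => Matrix.mul_add P Y Z
          map_smul' := fun r Y => (Matrix.mul_smul P r Y) }
      map_add' := by
        intro P Q
        refine ContinuousLinearMap.ext fun Y => ?_
        exact Matrix.add_mul P Q Y
      map_smul' := by
        intro r P
        refine ContinuousLinearMap.ext fun Y => ?_
        exact Matrix.smul_mul r P Y }
  let mulCL := LinearMap.toContinuousLinearMap mulL
  -- the candidate solution F
  set F : ℝ → Matrix (Fin n ⊕ Fin m) (Fin n ⊕ Fin m) ℝ :=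
    fun t => Matrix.fromBlocks (exp (-(t • A))) (exp (-(t • A)) * X t) 0 (exp (-(t • B)))
    with hF
  -- fromBlocks as a continuous linear map of the three varying blocks
  let L : (Matrix (Fin n) (Fin n) ℝ × Matrix (Fin n) (Fin m) ℝ × Matrix (Fin m) (Fin m) ℝ)
      →ₗ[ℝ] Matrix (Fin n ⊕ Fin m) (Fin n ⊕ Fin m) ℝ :=
    { toFun := fun p => Matrix.fromBlocks p.1 p.2.1 0 p.2.2
      map_add' := by
        intro p q
        simp [Matrix.fromBlocks_add]
      map_smul' := by
        intro r p
        simp [Matrix.fromBlocks_smul] }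
  let LC := LinearMap.toContinuousLinearMap L
  -- derivative of the top-right block
  have hTRder : ∀ t : ℝ,
      HasDerivAt (fun u : ℝ => exp (-(u • A)) * X u)
        ((-A) * exp (-(t • A)) * X t + exp (-(t • A)) * f t) t := by
    intro t
    have hc : HasDerivAt (fun u : ℝ => mulCL (exp (-(u • A))))
        (mulCL ((-A) * exp (-(t • A)))) t := by
      letI : NormedAddCommGroup (Matrix (Fin n) (Fin m) ℝ →L[ℝ] Matrix (Fin n) (Fin m) ℝ) := by
        exact ContinuousLinearMap.toNormedAddCommGroup
      letI : NormedSpace ℝ (Matrix (Fin n) (Fin m) ℝ →L[ℝ] Matrix (Fin n) (Fin m) ℝ) := by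
        exact ContinuousLinearMap.toNormedSpace
      exact mulCL.hasFDerivAt.comp_hasDerivAt (f := fun u : ℝ => exp (-(u • A))) t
        (by exact hWder t)
    have := hc.clm_apply (hXder t)
    exact this
  -- derivative of F
  have hFder : ∀ t : ℝ, HasDerivAt F (M * F t) t := by
    intro t
    have hp : HasDerivAt
        (fun u : ℝ => (exp (-(u • A)), exp (-(u • A)) * X u, exp (-(u • B))))
        ((-A) * exp (-(t • A)),
          (-A) * exp (-(t • A)) * X t + exp (-(t • A)) * f t,
          (-B) * exp (-(t • B))) t :=
      (hWder t).prodMk ((hTRder t).prodMk (hZder t))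
    have hL := LC.hasFDerivAt.comp_hasDerivAt t hp
    have key : LC ((-A) * exp (-(t • A)),
          (-A) * exp (-(t • A)) * X t + exp (-(t • A)) * f t,
          (-B) * exp (-(t • B))) = M * F t := by
      have hinv : exp (-(t • A)) * exp (t • A) = 1 := by
        rw [← Matrix.exp_add_of_commute _ _ ((Commute.refl (t • A)).neg_left), neg_add_cancel, exp_zero]
      have hexpf : exp (-(t • A)) * f t = C * exp (-(t • B)) := by
        show exp (-(t • A)) * (exp (t • A) * C * exp (-(t • B))) = _
        rw [← Matrix.mul_assoc, ← Matrix.mul_assoc, hinv, Matrix.one_mul]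
      show Matrix.fromBlocks _ _ _ _ = M * F t
      rw [hM, hF]
      rw [Matrix.fromBlocks_multiply]
      simp [hexpf, Matrix.mul_assoc]
    replace hL : HasDerivAt (⇑LC ∘ fun u => (exp (-(u • A)), exp (-(u • A)) * X u, exp (-(u • B))))
        (M * F t) t := by
      rw [← key]; exact hL
    have : (fun u : ℝ => LC (exp (-(u • A)), exp (-(u • A)) * X u, exp (-(u • B)))) = F := by
      funext u; rfl
    rw [← this]
    exact hL
  -- G t = exp (-(t • M)) * F t has zero derivative
  set G : ℝ → Matrix (Fin n ⊕ Fin m) (Fin n ⊕ Fin m) ℝ :=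
    fun t => exp (-(t • M)) * F t with hG
  have hcomm : ∀ t : ℝ, exp (-(t • M)) * M = M * exp (-(t • M)) := by
    intro t
    exact (((Commute.refl M).smul_right t).neg_right.exp_right).symm.eq
  have hGder : ∀ t : ℝ, HasDerivAt G 0 t := by
    intro t
    have := (hMder t).mul (hFder t)
    have heq : (-M) * exp (-(t • M)) * F t + exp (-(t • M)) * (M * F t) = 0 := by
      simp only [← Matrix.mul_assoc, hcomm t, neg_mul, neg_add_cancel]
    rw [heq] at this
    exact this
  have hGconst : ∀ t : ℝ, G t = G 0 := by
    intro t
    exact is_const_of_deriv_eq_zero (fun u => (hGder u).differentiableAt)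
      (fun u => (hGder u).deriv) t 0
  have hG0 : G 0 = 1 := by
    simp [hG, hF, hX, exp_zero, intervalIntegral.integral_same, Matrix.mul_zero,
      Matrix.fromBlocks_one]
  -- conclude exp (s • M) = F s
  have hinvM : exp (s • M) * exp (-(s • M)) = 1 := by
    rw [← Matrix.exp_add_of_commute _ _ ((Commute.refl (s • M)).neg_right), add_neg_cancel, exp_zero]
  have hmain : exp (s • M) = F s := by
    calc exp (s • M) = exp (s • M) * G s := by rw [hGconst s, hG0, mul_one]
    _ = exp (s • M) * exp (-(s • M)) * F s := by rw [hG, mul_assoc]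
    _ = F s := by rw [hinvM, one_mul]
  -- identify the Bochner integral with the entrywise integral
  have hXentry : X s = Matrix.of (fun i j =>
      ∫ u in (0:ℝ)..s, (exp (u • A) * C * exp (-(u • B))) i j) := by
    ext i j
    have := (LinearMap.toContinuousLinearMap
      ({ toFun := fun Y => Y i j
         map_add' := fun _ _ => rfl
         map_smul' := fun _ _ => rfl } :
        Matrix (Fin n) (Fin m) ℝ →ₗ[ℝ] ℝ)).intervalIntegral_comp_comm
      (hcont.intervalIntegrable (μ := MeasureTheory.volume) 0 s)
    exact this.symm
  rw [hmain, hF]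
  simp only []
  rw [hXentry]
end

section
/- Let A be an r×r real matrix, B a q×q real matrix, C an r×q real matrix, and s ∈ ℝ. Then the matrix exponential of s times the (q+r)×(q+r) block matrix with blocks (B, 0; C, A) equals the block matrix whose top-left block is exp(sB), whose top-right block is 0, whose bottom-left block is (∫₀ˢ exp(uA)·C·exp(−uB) du)·exp(sB), and whose bottom-right block is exp(sA). -/
open scoped Matrix
open NormedSpace

section Aux

attribute [local instance] Matrix.linftyOpSemiNormedRing Matrix.linftyOpNormedRing
  Matrix.linftyOpNormedAlgebra Matrix.linftyOpNormedAddCommGroup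

variable (q r : ℕ)

noncomputable def expBlockPhi :
    (Matrix (Fin q) (Fin q) ℝ × Matrix (Fin r) (Fin r) ℝ) →ₐ[ℝ]
      Matrix (Fin q ⊕ Fin r) (Fin q ⊕ Fin r) ℝ where
  toFun X := Matrix.fromBlocks X.1 0 0 X.2
  map_one' := Matrix.fromBlocks_one
  map_mul' X Y := by simp [Matrix.fromBlocks_multiply]
  map_zero' := by simp [Matrix.fromBlocks_zero]
  map_add' X Y := by simp [Matrix.fromBlocks_add]
  commutes' c := by
    simp only [Algebra.algebraMap_eq_smul_one, Prod.smul_def, Prod.fst_one, Prod.snd_one,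
      ← Matrix.fromBlocks_one, Matrix.fromBlocks_smul, smul_zero]

theorem expBlockPhi_continuous : Continuous (expBlockPhi q r) :=
  (expBlockPhi q r).toLinearMap.continuous_of_finiteDimensional

theorem exp_fromBlocks_diag (X : Matrix (Fin q) (Fin q) ℝ) (Y : Matrix (Fin r) (Fin r) ℝ) :
    exp (Matrix.fromBlocks X 0 0 Y) = Matrix.fromBlocks (exp X) 0 0 (exp Y) := by
  have h := map_exp (expBlockPhi q r) (expBlockPhi_continuous q r) (X, Y)
  have h2 : exp ((X, Y) : _ × _) = (exp X, exp Y) :=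
    Prod.ext (Prod.fst_exp _) (Prod.snd_exp _)
  erw [h2] at h
  exact h.symm

end Aux

section Main

attribute [local instance] Matrix.linftyOpSemiNormedRing Matrix.linftyOpNormedRing
  Matrix.linftyOpNormedAlgebra Matrix.linftyOpNormedAddCommGroup

variable {q r : ℕ}

set_option maxHeartbeats 2000000 in
theorem exp_block_key (A : Matrix (Fin r) (Fin r) ℝ) (B : Matrix (Fin q) (Fin q) ℝ)
    (C : Matrix (Fin r) (Fin q) ℝ) (s : ℝ) :
    exp (s • Matrix.fromBlocks B 0 C A) =
      Matrix.fromBlocks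
        (exp (s • B))
        0
        ((Matrix.of (fun i j =>
            ∫ u in (0:ℝ)..s, (exp (u • A) * C * exp (-(u • B))) i j)) * exp (s • B))
        (exp (s • A)) := by
  set D : Matrix (Fin q ⊕ Fin r) (Fin q ⊕ Fin r) ℝ := Matrix.fromBlocks B 0 0 A with hD
  set Cs : Matrix (Fin q ⊕ Fin r) (Fin q ⊕ Fin r) ℝ := Matrix.fromBlocks 0 0 C 0 with hCs
  set M : Matrix (Fin q ⊕ Fin r) (Fin q ⊕ Fin r) ℝ := Matrix.fromBlocks B 0 C A with hM
  have hMDC : M = D + Cs := by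
    rw [hM, hD, hCs, Matrix.fromBlocks_add]; simp
  -- exponential of scalar multiples of D in block form
  have hED : ∀ u : ℝ, exp (u • D) = Matrix.fromBlocks (exp (u • B)) 0 0 (exp (u • A)) := by
    intro u
    rw [hD, Matrix.fromBlocks_smul]; simp only [smul_zero]; rw [exp_fromBlocks_diag]
  have hEDneg : ∀ u : ℝ, exp (-(u • D)) =
      Matrix.fromBlocks (exp (-(u • B))) 0 0 (exp (-(u • A))) := by
    intro u
    rw [hD, Matrix.fromBlocks_smul, Matrix.fromBlocks_neg]
    simp only [smul_zero, neg_zero]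
    rw [exp_fromBlocks_diag]
  set g : ℝ → Matrix (Fin q ⊕ Fin r) (Fin q ⊕ Fin r) ℝ :=
    fun u => exp (u • D) * Cs * exp (-(u • D)) with hg
  have hgblock : ∀ u : ℝ, g u =
      Matrix.fromBlocks 0 0 (exp (u • A) * C * exp (-(u • B))) 0 := by
    intro u
    rw [hg]; dsimp only
    rw [hED u, hEDneg u, hCs]
    simp [Matrix.fromBlocks_multiply, Matrix.mul_assoc]
  have hg_cont : Continuous g := by
    have h1 : Continuous fun u : ℝ => exp (u • D) :=
      exp_continuous.comp (continuous_id.smul continuous_const)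
    have h2 : Continuous fun u : ℝ => exp (-(u • D)) :=
      exp_continuous.comp ((continuous_id.smul continuous_const).neg)
    exact (h1.mul continuous_const).mul h2
  -- derivative of g
  have hgd : ∀ u : ℝ, HasDerivAt g (D * g u - g u * D) u := by
    intro u
    have h1 : HasDerivAt (fun v : ℝ => exp (v • D)) (D * exp (u • D)) u :=
      hasDerivAt_exp_smul_const' D u
    have h2 : HasDerivAt (fun v : ℝ => exp (-(v • D))) (exp (-(u • D)) * (-D)) u := by
      have := hasDerivAt_exp_smul_const (-D) u
      simp only [smul_neg] at this
      exact this
    have h3 := (h1.mul (hasDerivAt_const u Cs)).mul h2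
    refine h3.congr_deriv ?_
    rw [hg]; dsimp only
    simp only [mul_zero, add_zero, mul_neg, ← sub_eq_add_neg, mul_assoc, Pi.mul_apply]
  set K : ℝ → Matrix (Fin q ⊕ Fin r) (Fin q ⊕ Fin r) ℝ :=
    fun t => ∫ u in (0:ℝ)..t, g u with hK
  have hKd : ∀ t : ℝ, HasDerivAt K (g t) t := fun t =>
    (hg_cont.integral_hasStrictDerivAt 0 t).hasDerivAt
  have hint := fun t : ℝ =>
    hg_cont.intervalIntegrable (μ := MeasureTheory.volume) 0 t
  have hcomm : ∀ t : ℝ, D * K t - K t * D = g t - Cs := by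
    intro t
    have hftc : (∫ u in (0:ℝ)..t, (D * g u - g u * D)) = g t - g 0 :=
      intervalIntegral.integral_eq_sub_of_hasDerivAt (fun u _ => hgd u)
        (((continuous_const.mul hg_cont).sub (hg_cont.mul continuous_const)).intervalIntegrable
          0 t)
    have hg0 : g 0 = Cs := by rw [hg]; simp
    have h1 : (∫ u in (0:ℝ)..t, D * g u) = D * K t := by
      have h := (ContinuousLinearMap.mul ℝ
        (Matrix (Fin q ⊕ Fin r) (Fin q ⊕ Fin r) ℝ) D).intervalIntegral_comp_comm (hint t)
      simpa using h
    have h2 : (∫ u in (0:ℝ)..t, g u * D) = K t * D := by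
      have h := ((ContinuousLinearMap.mul ℝ
        (Matrix (Fin q ⊕ Fin r) (Fin q ⊕ Fin r) ℝ)).flip D).intervalIntegral_comp_comm (hint t)
      simpa using h
    rw [intervalIntegral.integral_sub (f := fun u => D * g u) (g := fun u => g u * D) ((continuous_const.mul hg_cont).intervalIntegrable 0 t)
      ((hg_cont.mul continuous_const).intervalIntegrable 0 t), h1, h2, hg0] at hftc
    exact hftc
  set E : ℝ → Matrix (Fin q ⊕ Fin r) (Fin q ⊕ Fin r) ℝ := fun t => exp (t • D) with hE
  have hEd : ∀ t : ℝ, HasDerivAt E (E t * D) t := fun t => hasDerivAt_exp_smul_const D t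
  have hDE : ∀ t : ℝ, E t * D = D * E t := fun t =>
    (((Commute.refl D).smul_right t).exp_right).eq.symm
  set F : ℝ → Matrix (Fin q ⊕ Fin r) (Fin q ⊕ Fin r) ℝ := fun t => (1 + K t) * E t with hF
  have hCg : ∀ u : ℝ, Cs * g u = 0 := by
    intro u
    rw [hgblock u, hCs]
    ext i j
    rcases i with i | i <;> rcases j with j | j <;>
      simp [Matrix.fromBlocks_multiply]
  have hCK : ∀ t : ℝ, Cs * K t = 0 := by
    intro t
    have h := (ContinuousLinearMap.mul ℝ
      (Matrix (Fin q ⊕ Fin r) (Fin q ⊕ Fin r) ℝ) Cs).intervalIntegral_comp_comm (hint t)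
    simp only [ContinuousLinearMap.mul_apply'] at h
    rw [hK]; dsimp only
    rw [← h]
    simp [hCg]
  have hCKE : ∀ t : ℝ, Cs * (K t * E t) = 0 := by
    intro t; rw [← mul_assoc, hCK, zero_mul]
  have hFd : ∀ t : ℝ, HasDerivAt F (M * F t) t := by
    intro t
    have h := ((hasDerivAt_const t (1 : Matrix (Fin q ⊕ Fin r) (Fin q ⊕ Fin r) ℝ)).add
      (hKd t)).mul (hEd t)
    refine h.congr_deriv ?_
    have hgt : g t = D * K t - K t * D + Cs := by
      rw [hcomm t]; abel
    rw [hMDC, hF]; dsimp only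
    rw [hgt, hDE t]
    simp only [add_mul, mul_add, sub_mul, zero_add, one_mul, mul_one, mul_assoc, hCKE t, Pi.add_apply]
    abel
  have hF0 : F 0 = 1 := by
    rw [hF]; dsimp only
    rw [hK]; dsimp only
    simp [hE]
  set Hf : ℝ → Matrix (Fin q ⊕ Fin r) (Fin q ⊕ Fin r) ℝ :=
    fun t => exp (t • (-M)) * F t with hHf
  have hHd : ∀ t : ℝ, HasDerivAt Hf 0 t := by
    intro t
    have h1 : HasDerivAt (fun v : ℝ => exp (v • (-M))) ((-M) * exp (t • (-M))) t :=
      hasDerivAt_exp_smul_const' (-M) t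
    have h := h1.mul (hFd t)
    refine h.congr_deriv ?_
    have hc : M * exp (t • (-M)) = exp (t • (-M)) * M :=
      (((Commute.refl M).neg_right.smul_right t).exp_right).eq
    have h2 : exp (t • (-M)) * (M * F t) = M * exp (t • (-M)) * F t := by
      rw [← mul_assoc, ← hc]
    rw [h2, neg_mul, neg_mul, neg_add_cancel]
  have hHconst : Hf s = Hf 0 :=
    is_const_of_deriv_eq_zero (fun x => (hHd x).differentiableAt)
      (fun x => (hHd x).deriv) s 0
  have hH0 : Hf 0 = 1 := by
    rw [hHf]; dsimp only
    simp [hF0]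
  have h3 : exp (s • (-M)) * F s = 1 := hHconst.trans hH0
  have hinv : exp (s • M) * exp (s • (-M)) = 1 := by
    have hcm : Commute (s • M) (s • (-M)) :=
      (((Commute.refl M).neg_right).smul_left s).smul_right s
    rw [← Matrix.exp_add_of_commute _ _ hcm]
    simp
  have hFs : exp (s • M) = F s := by
    calc exp (s • M) = exp (s • M) * (exp (s • (-M)) * F s) := by
          rw [h3, mul_one]
      _ = (exp (s • M) * exp (s • (-M))) * F s := (mul_assoc _ _ _).symm
      _ = F s := by rw [hinv, one_mul]
  have hKblock : K s = Matrix.fromBlocks 0 0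
      (Matrix.of fun i j => ∫ u in (0:ℝ)..s, (exp (u • A) * C * exp (-(u • B))) i j) 0 := by
    have hij : ∀ i j, (K s) i j = ∫ u in (0:ℝ)..s, g u i j := by
      intro i j
      let L : Matrix (Fin q ⊕ Fin r) (Fin q ⊕ Fin r) ℝ →ₗ[ℝ] ℝ :=
        { toFun := fun X => X i j, map_add' := fun _ _ => rfl, map_smul' := fun _ _ => rfl }
      have h := (LinearMap.toContinuousLinearMap L).intervalIntegral_comp_comm (hint s)
      have h' := h.symm
      exact h'
    ext i j
    rw [hij i j]
    rcases i with i | i <;> rcases j with j | j <;>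
      simp only [hgblock, Matrix.fromBlocks_apply₁₁, Matrix.fromBlocks_apply₁₂,
        Matrix.fromBlocks_apply₂₁, Matrix.fromBlocks_apply₂₂, Matrix.zero_apply,
        Matrix.of_apply, intervalIntegral.integral_zero]
  rw [hFs, hF]
  dsimp only
  rw [hKblock, hE]; dsimp only
  rw [hED s]
  rw [show (1 : Matrix (Fin q ⊕ Fin r) (Fin q ⊕ Fin r) ℝ) = Matrix.fromBlocks 1 0 0 1 from
    Matrix.fromBlocks_one.symm, Matrix.fromBlocks_add, Matrix.fromBlocks_multiply]
  simp only [add_zero, zero_add, Matrix.one_mul, Matrix.mul_one, Matrix.zero_mul,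
    Matrix.mul_zero]

end Main

/-- For an `r×r` matrix `A`, a `q×q` matrix `B`, an `r×q` matrix `C` and
`s : ℝ`, the matrix exponential of `s` times the `(q+r)×(q+r)` block matrix `(B, 0; C, A)` is
the block matrix with blocks `exp (sB)`, `0`, `(∫₀ˢ exp (uA) C exp (-uB) du) * exp (sB)`,
`exp (sA)`, where the integral is taken entrywise. -/
theorem matrix_exp_block_triangular_integral_lower
    (r q : ℕ) (A : Matrix (Fin r) (Fin r) ℝ) (B : Matrix (Fin q) (Fin q) ℝ)
    (C : Matrix (Fin r) (Fin q) ℝ) (s : ℝ) :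
    NormedSpace.exp (s • Matrix.fromBlocks B 0 C A) =
      Matrix.fromBlocks
        (NormedSpace.exp (s • B))
        0
        ((Matrix.of (fun i j =>
            ∫ u in (0:ℝ)..s,
              (NormedSpace.exp (u • A) * C * NormedSpace.exp (-(u • B))) i j)) *
          NormedSpace.exp (s • B))
        (NormedSpace.exp (s • A)) := by
  exact exp_block_key A B C s
end

section
/- Fix natural numbers n, m, p and let φ be the (n+p)×(n+m) real block matrix with the n×n identity in the top-left block and zeros elsewhere. For every (n+m)×(n+p) real matrix Z and every s ∈ ℝ, the series exp_*(sZ) := ∑_{k=1}^∞ (sZ)·(φ·sZ)^{k−1}/k! converges absolutely (the family of terms is summable), and for all s, t ∈ ℝ one has exp_*(sZ) ∗ exp_*(tZ) = exp_*((s+t)Z), where a ∗ b := a + b + a·φ·b. In particular t ↦ exp_*(tZ) is a one-parameter subgroup for the group operation ∗. -/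
open scoped Matrix

/-- The structural matrix `φ : Mat_{(n+p)×(n+m)}(ℝ)` with the `n×n` identity in the
top-left block and zeros elsewhere. -/
noncomputable def structPhi (n m p : ℕ) : Matrix (Fin n ⊕ Fin p) (Fin n ⊕ Fin m) ℝ :=
  Matrix.fromBlocks 1 0 0 0

/-- The `∗`-product `a ∗ b := a + b + a·φ·b` on `(n+m)×(n+p)` real matrices. -/
noncomputable def starMul (n m p : ℕ)
    (a b : Matrix (Fin n ⊕ Fin m) (Fin n ⊕ Fin p) ℝ) :
    Matrix (Fin n ⊕ Fin m) (Fin n ⊕ Fin p) ℝ :=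
  a + b + a * structPhi n m p * b

/-- The `∗`-exponential `exp_*(Z) := ∑_{k=1}^∞ Z·(φ·Z)^{k-1}/k!`
(here reindexed as a sum over `k : ℕ` of `Z·(φ·Z)^k/(k+1)!`). -/
noncomputable def starExp (n m p : ℕ)
    (Z : Matrix (Fin n ⊕ Fin m) (Fin n ⊕ Fin p) ℝ) :
    Matrix (Fin n ⊕ Fin m) (Fin n ⊕ Fin p) ℝ :=
  ∑' k : ℕ, ((Nat.factorial (k + 1) : ℝ))⁻¹ • (Z * (structPhi n m p * Z) ^ k)

section Helpers

variable {α β γ : Type*} [Fintype α] [Fintype β] [Fintype γ]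
  [DecidableEq α] [DecidableEq β]

/-- Left matrix multiplication as an `AddMonoidHom`. -/
private def mulLeftHom (B : Matrix α β ℝ) : Matrix β γ ℝ →+ Matrix α γ ℝ :=
  AddMonoidHom.mk' (fun X => B * X) fun x y => Matrix.mul_add B x y

private lemma summable_mulLeft {f : ℕ → Matrix β γ ℝ} (B : Matrix α β ℝ)
    (hf : Summable f) : Summable fun k => B * f k :=
  (hf.hasSum.map (mulLeftHom B)
    (continuous_const.matrix_mul continuous_id)).summable

private lemma mulLeft_tsum {f : ℕ → Matrix β γ ℝ} (B : Matrix α β ℝ)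
    (hf : Summable f) : B * (∑' k, f k) = ∑' k, B * f k :=
  (hf.hasSum.map (mulLeftHom B)
    (continuous_const.matrix_mul continuous_id)).tsum_eq.symm

/-- `fromBlocks 0 b 0 0` as an `AddMonoidHom`. -/
private def fbBHom : Matrix α γ ℝ →+ Matrix (α ⊕ γ) (α ⊕ γ) ℝ where
  toFun b := Matrix.fromBlocks 0 b 0 0
  map_zero' := by simp
  map_add' x y := by simp [Matrix.fromBlocks_add]

/-- `fromBlocks 0 0 0 d` as an `AddMonoidHom`. -/
private def fbDHom : Matrix γ γ ℝ →+ Matrix (α ⊕ γ) (α ⊕ γ) ℝ where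
  toFun d := Matrix.fromBlocks 0 0 0 d
  map_zero' := by simp
  map_add' x y := by simp [Matrix.fromBlocks_add]

private lemma tsum_fromBlocks {B : ℕ → Matrix α γ ℝ} {D : ℕ → Matrix γ γ ℝ}
    (hB : Summable B) (hD : Summable D) :
    ∑' k, Matrix.fromBlocks (0 : Matrix α α ℝ) (B k) (0 : Matrix γ α ℝ) (D k) =
      Matrix.fromBlocks 0 (∑' k, B k) 0 (∑' k, D k) := by
  have h1 : HasSum (fun k => (fbBHom (α := α) (γ := γ)) (B k)) (fbBHom (∑' k, B k)) :=
    hB.hasSum.map _ (by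
      exact Continuous.matrix_fromBlocks continuous_const continuous_id
        continuous_const continuous_const)
  have h2 : HasSum (fun k => (fbDHom (α := α) (γ := γ)) (D k)) (fbDHom (∑' k, D k)) :=
    hD.hasSum.map _ (by
      exact Continuous.matrix_fromBlocks continuous_const continuous_const
        continuous_const continuous_id)
  have h := (h1.add h2).tsum_eq
  simp only [fbBHom, fbDHom, AddMonoidHom.coe_mk, ZeroHom.coe_mk,
    Matrix.fromBlocks_add, add_zero, zero_add] at h
  exact h

/-- Summability of the exponential series for square real matrices (in the usual
entrywise topology). -/
private lemma exp_term_summable (N : Matrix α α ℝ) :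
    Summable fun k : ℕ => ((Nat.factorial k : ℝ))⁻¹ • N ^ k := by
  letI : SeminormedRing (Matrix α α ℝ) := Matrix.linftyOpSemiNormedRing
  letI : NormedRing (Matrix α α ℝ) := Matrix.linftyOpNormedRing
  letI : NormedAlgebra ℝ (Matrix α α ℝ) := Matrix.linftyOpNormedAlgebra
  exact NormedSpace.expSeries_summable' (𝕂 := ℝ) N

end Helpers

private lemma starExp_term_summable (n m p : ℕ)
    (W : Matrix (Fin n ⊕ Fin m) (Fin n ⊕ Fin p) ℝ) :
    Summable fun k : ℕ =>
      ((Nat.factorial (k + 1) : ℝ))⁻¹ • (W * (structPhi n m p * W) ^ k) := by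
  letI : NormedAddCommGroup (Matrix (Fin n ⊕ Fin m) (Fin n ⊕ Fin p) ℝ) :=
    Matrix.linftyOpNormedAddCommGroup
  letI : NormedSpace ℝ (Matrix (Fin n ⊕ Fin m) (Fin n ⊕ Fin p) ℝ) :=
    Matrix.linftyOpNormedSpace
  letI : SeminormedRing (Matrix (Fin n ⊕ Fin p) (Fin n ⊕ Fin p) ℝ) :=
    Matrix.linftyOpSemiNormedRing
  set A := structPhi n m p * W with hA
  have hbound : ∀ k : ℕ, ‖W * A ^ k‖ ≤ ‖W‖ * ‖A‖ ^ k := by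
    intro k
    induction k with
    | zero => simp
    | succ k ih =>
        calc ‖W * A ^ (k + 1)‖ = ‖W * A ^ k * A‖ := by rw [pow_succ, Matrix.mul_assoc]
          _ ≤ ‖W * A ^ k‖ * ‖A‖ := Matrix.linfty_opNorm_mul _ _
          _ ≤ ‖W‖ * ‖A‖ ^ k * ‖A‖ := by
              exact mul_le_mul_of_nonneg_right ih (norm_nonneg _)
          _ = ‖W‖ * ‖A‖ ^ (k + 1) := by ring
  apply Summable.of_norm_bounded (g := fun k => ‖W‖ * (‖A‖ ^ k / Nat.factorial k))
    ((Real.summable_pow_div_factorial ‖A‖).mul_left ‖W‖)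
  intro k
  rw [norm_smul, Real.norm_eq_abs]
  have h1 : |((Nat.factorial (k + 1) : ℝ))⁻¹| ≤ ((Nat.factorial k : ℝ))⁻¹ := by
    rw [abs_of_nonneg (by positivity)]
    apply inv_anti₀ (by positivity)
    exact_mod_cast Nat.factorial_le (Nat.le_succ k)
  calc |((Nat.factorial (k + 1) : ℝ))⁻¹| * ‖W * A ^ k‖
      ≤ ((Nat.factorial k : ℝ))⁻¹ * (‖W‖ * ‖A‖ ^ k) := by
        exact mul_le_mul h1 (hbound k) (norm_nonneg _) (by positivity)
    _ = ‖W‖ * (‖A‖ ^ k / Nat.factorial k) := by ring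

private lemma starExp_exp_block (n m p : ℕ)
    (Z : Matrix (Fin n ⊕ Fin m) (Fin n ⊕ Fin p) ℝ) (s : ℝ) :
    NormedSpace.exp
        (s • Matrix.fromBlocks (0 : Matrix (Fin n ⊕ Fin m) (Fin n ⊕ Fin m) ℝ) Z
          (0 : Matrix (Fin n ⊕ Fin p) (Fin n ⊕ Fin m) ℝ) (structPhi n m p * Z)) =
      Matrix.fromBlocks (1 : Matrix (Fin n ⊕ Fin m) (Fin n ⊕ Fin m) ℝ)
        (starExp n m p (s • Z)) (0 : Matrix (Fin n ⊕ Fin p) (Fin n ⊕ Fin m) ℝ)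
        (1 + structPhi n m p * starExp n m p (s • Z)) := by
  set A := structPhi n m p * Z with hA
  set M := Matrix.fromBlocks (0 : Matrix (Fin n ⊕ Fin m) (Fin n ⊕ Fin m) ℝ) Z
      (0 : Matrix (Fin n ⊕ Fin p) (Fin n ⊕ Fin m) ℝ) A with hM
  have hMpow : ∀ k : ℕ, M ^ (k + 1) = Matrix.fromBlocks 0 (Z * A ^ k) 0 (A ^ (k + 1)) := by
    intro k
    induction k with
    | zero => simp [hM]
    | succ k ih =>
        rw [pow_succ, ih, hM, Matrix.fromBlocks_multiply]
        simp [Matrix.mul_assoc, pow_succ]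
  have hterm : ∀ k : ℕ,
      ((Nat.factorial (k + 1) : ℝ))⁻¹ • ((s • Z) * (structPhi n m p * (s • Z)) ^ k) =
        (((Nat.factorial (k + 1) : ℝ))⁻¹ * s ^ (k + 1)) • (Z * A ^ k) := by
    intro k
    rw [Matrix.mul_smul, ← hA, smul_pow, Matrix.mul_smul, Matrix.smul_mul,
      smul_smul, smul_smul, pow_succ]
    ring_nf
  have hsumB : Summable fun k : ℕ =>
      (((Nat.factorial (k + 1) : ℝ))⁻¹ * s ^ (k + 1)) • (Z * A ^ k) :=
    (starExp_term_summable n m p (s • Z)).congr hterm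
  have hstar : starExp n m p (s • Z) =
      ∑' k : ℕ, (((Nat.factorial (k + 1) : ℝ))⁻¹ * s ^ (k + 1)) • (Z * A ^ k) :=
    tsum_congr hterm
  have hD : ∀ k : ℕ,
      structPhi n m p * ((((Nat.factorial (k + 1) : ℝ))⁻¹ * s ^ (k + 1)) • (Z * A ^ k)) =
        (((Nat.factorial (k + 1) : ℝ))⁻¹ * s ^ (k + 1)) • A ^ (k + 1) := by
    intro k
    rw [Matrix.mul_smul]
    congr 1
    rw [pow_succ', ← Matrix.mul_assoc, ← hA]
  have hsumD : Summable fun k : ℕ =>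
      (((Nat.factorial (k + 1) : ℝ))⁻¹ * s ^ (k + 1)) • A ^ (k + 1) :=
    ((summable_mulLeft (structPhi n m p) hsumB).congr hD)
  have hPhiStar : structPhi n m p * starExp n m p (s • Z) =
      ∑' k : ℕ, (((Nat.factorial (k + 1) : ℝ))⁻¹ * s ^ (k + 1)) • A ^ (k + 1) := by
    rw [hstar, mulLeft_tsum _ hsumB]
    exact tsum_congr hD
  simp only [NormedSpace.exp_eq_tsum ℝ]
  rw [Summable.tsum_eq_zero_add (exp_term_summable (s • M))]
  have hterm2 : ∀ k : ℕ,
      ((Nat.factorial (k + 1) : ℝ))⁻¹ • (s • M) ^ (k + 1) =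
        Matrix.fromBlocks 0 ((((Nat.factorial (k + 1) : ℝ))⁻¹ * s ^ (k + 1)) • (Z * A ^ k)) 0
          ((((Nat.factorial (k + 1) : ℝ))⁻¹ * s ^ (k + 1)) • A ^ (k + 1)) := by
    intro k
    rw [smul_pow, hMpow k, smul_smul, Matrix.fromBlocks_smul]
    simp
  rw [tsum_congr hterm2, tsum_fromBlocks hsumB hsumD, ← hstar, ← hPhiStar]
  have hone : ((Nat.factorial 0 : ℝ))⁻¹ • (s • M) ^ 0 =
      (1 : Matrix ((Fin n ⊕ Fin m) ⊕ (Fin n ⊕ Fin p)) ((Fin n ⊕ Fin m) ⊕ (Fin n ⊕ Fin p)) ℝ) := by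
    simp
  rw [hone]
  conv_lhs => rw [← Matrix.fromBlocks_one]
  rw [Matrix.fromBlocks_add]
  simp

/-- The series defining `exp_*(sZ)` converges absolutely (the family of its
terms is summable), and `s ↦ exp_*(sZ)` is a one-parameter subgroup for the group operation
`a ∗ b = a + b + a·φ·b`: `exp_*(sZ) ∗ exp_*(tZ) = exp_*((s+t)Z)`. -/
theorem starExp_summable_and_one_parameter_subgroup
    (n m p : ℕ) (Z : Matrix (Fin n ⊕ Fin m) (Fin n ⊕ Fin p) ℝ) :
    (∀ s : ℝ, Summable fun k : ℕ =>
        ((Nat.factorial (k + 1) : ℝ))⁻¹ • ((s • Z) * (structPhi n m p * (s • Z)) ^ k)) ∧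
    (∀ s t : ℝ,
        starMul n m p (starExp n m p (s • Z)) (starExp n m p (t • Z)) =
          starExp n m p ((s + t) • Z)) := by
  constructor
  · exact fun s => starExp_term_summable n m p (s • Z)
  · intro s t
    set M := Matrix.fromBlocks (0 : Matrix (Fin n ⊕ Fin m) (Fin n ⊕ Fin m) ℝ) Z
        (0 : Matrix (Fin n ⊕ Fin p) (Fin n ⊕ Fin m) ℝ) (structPhi n m p * Z) with hM
    have hcomm : Commute (s • M) (t • M) :=
      ((Commute.refl M).smul_left s).smul_right t
    have h := Matrix.exp_add_of_commute (s • M) (t • M) hcomm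
    rw [← add_smul] at h
    rw [starExp_exp_block n m p Z (s + t), starExp_exp_block n m p Z s,
      starExp_exp_block n m p Z t, Matrix.fromBlocks_multiply] at h
    have h12 := congrArg Matrix.toBlocks₁₂ h
    simp only [Matrix.toBlocks_fromBlocks₁₂] at h12
    -- h12 : starExp (s+t) = 1 * starExp t + starExp s * (1 + φ * starExp t)
    rw [starMul, h12, Matrix.one_mul, Matrix.mul_add, Matrix.mul_one, Matrix.mul_assoc]
    abel
end

section
/- Fix natural numbers n, m, p, let φ be the (n+p)×(n+m) real block matrix with the n×n identity in the top-left block and zeros elsewhere, and let Z be the (n+m)×(n+p) real block matrix with blocks (R, S; T, U), where R is n×n, S is n×p, T is m×n and U is m×p. Then the matrix series ∑_{k≥1} R^{k−1}/k! and ∑_{k≥2} R^{k−2}/k! converge absolutely and exp_*(Z) equals the block matrix with blocks (exp(R) − 1, (∑_{k≥1} R^{k−1}/k!)·S; T·(∑_{k≥1} R^{k−1}/k!), U + T·(∑_{k≥2} R^{k−2}/k!)·S), where exp is the usual matrix exponential. -/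
open scoped Matrix

lemma aux_sumA (n : ℕ) (j : ℕ) (R : Matrix (Fin n) (Fin n) ℝ) :
    Summable fun k : ℕ => ((Nat.factorial (k + j) : ℝ))⁻¹ • R ^ k := by
  letI := Matrix.linftyOpNormedRing (n := Fin n) (α := ℝ)
  letI := Matrix.linftyOpNormedAlgebra (n := Fin n) (R := ℝ) (α := ℝ)
  have hexp : Summable fun k : ℕ => ((Nat.factorial k : ℝ))⁻¹ • R ^ k :=
    NormedSpace.expSeries_summable' R
  have hnorm : Summable fun k : ℕ => ‖((Nat.factorial k : ℝ))⁻¹ • R ^ k‖ :=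
    summable_norm_iff.mpr hexp
  apply Summable.of_norm_bounded hnorm
  intro k
  rw [norm_smul, norm_smul]
  apply mul_le_mul_of_nonneg_right _ (norm_nonneg _)
  rw [norm_inv, norm_inv]
  apply inv_anti₀
  · simp [Nat.factorial_pos]
  · simp only [Real.norm_natCast]
    exact_mod_cast Nat.factorial_le (Nat.le_add_right k j)

lemma aux_smul_fromBlocks {l r s t : Type*} (c : ℝ) (A : Matrix l r ℝ) (B : Matrix l s ℝ)
    (C : Matrix t r ℝ) (D : Matrix t s ℝ) :
    c • Matrix.fromBlocks A B C D = Matrix.fromBlocks (c • A) (c • B) (c • C) (c • D) := by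
  ext i j
  cases i <;> cases j <;> simp [Matrix.fromBlocks]

lemma aux_summable_fromBlocks {l r s t : Type*}
    {a : ℕ → Matrix l r ℝ} {b : ℕ → Matrix l s ℝ} {c : ℕ → Matrix t r ℝ} {d : ℕ → Matrix t s ℝ}
    (ha : Summable a) (hb : Summable b) (hc : Summable c) (hd : Summable d) :
    Summable fun k => Matrix.fromBlocks (a k) (b k) (c k) (d k) := by
  refine Pi.summable.mpr ?_
  intro i
  refine Pi.summable.mpr ?_
  intro j
  cases i <;> cases j <;>
    simp only [Matrix.fromBlocks_apply₁₁, Matrix.fromBlocks_apply₁₂,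
      Matrix.fromBlocks_apply₂₁, Matrix.fromBlocks_apply₂₂]
  · exact Pi.summable.mp (Pi.summable.mp ha _) _
  · exact Pi.summable.mp (Pi.summable.mp hb _) _
  · exact Pi.summable.mp (Pi.summable.mp hc _) _
  · exact Pi.summable.mp (Pi.summable.mp hd _) _

lemma aux_tsum_fromBlocks {l r s t : Type*}
    {a : ℕ → Matrix l r ℝ} {b : ℕ → Matrix l s ℝ} {c : ℕ → Matrix t r ℝ} {d : ℕ → Matrix t s ℝ}
    (ha : Summable a) (hb : Summable b) (hc : Summable c) (hd : Summable d) :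
    ∑' k, Matrix.fromBlocks (a k) (b k) (c k) (d k) =
      Matrix.fromBlocks (∑' k, a k) (∑' k, b k) (∑' k, c k) (∑' k, d k) := by
  have hF := aux_summable_fromBlocks ha hb hc hd
  ext i j
  erw [tsum_apply hF, tsum_apply (Pi.summable.mp hF i)]
  cases i <;> cases j <;>
    simp only [Matrix.fromBlocks_apply₁₁, Matrix.fromBlocks_apply₁₂,
      Matrix.fromBlocks_apply₂₁, Matrix.fromBlocks_apply₂₂]
  · erw [tsum_apply ha, tsum_apply (Pi.summable.mp ha _)]
  · erw [tsum_apply hb, tsum_apply (Pi.summable.mp hb _)]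
  · erw [tsum_apply hc, tsum_apply (Pi.summable.mp hc _)]
  · erw [tsum_apply hd, tsum_apply (Pi.summable.mp hd _)]

set_option maxHeartbeats 1000000 in
/-- The series `∑_{k≥1} R^{k-1}/k!` and `∑_{k≥2} R^{k-2}/k!` converge
absolutely, and for `Z = (R, S; T, U)` the `∗`-exponential `exp_*(Z)` equals the block
matrix `(exp R - 1, (∑_{k≥1} R^{k-1}/k!)·S; T·(∑_{k≥1} R^{k-1}/k!),
U + T·(∑_{k≥2} R^{k-2}/k!)·S)`, where `exp` is the usual matrix exponential.
(The sums over `k ≥ 1` and `k ≥ 2` are reindexed as sums over `k : ℕ` of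
`R^k/(k+1)!` and `R^k/(k+2)!` respectively.) -/
theorem starExp_blocks
    (n m p : ℕ) (R : Matrix (Fin n) (Fin n) ℝ) (S : Matrix (Fin n) (Fin p) ℝ)
    (T : Matrix (Fin m) (Fin n) ℝ) (U : Matrix (Fin m) (Fin p) ℝ) :
    (Summable fun k : ℕ => ((Nat.factorial (k + 1) : ℝ))⁻¹ • R ^ k) ∧
    (Summable fun k : ℕ => ((Nat.factorial (k + 2) : ℝ))⁻¹ • R ^ k) ∧
    starExp n m p (Matrix.fromBlocks R S T U) =
      Matrix.fromBlocks
        (NormedSpace.exp R - 1)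
        ((∑' k : ℕ, ((Nat.factorial (k + 1) : ℝ))⁻¹ • R ^ k) * S)
        (T * ∑' k : ℕ, ((Nat.factorial (k + 1) : ℝ))⁻¹ • R ^ k)
        (U + T * (∑' k : ℕ, ((Nat.factorial (k + 2) : ℝ))⁻¹ • R ^ k) * S) := by
  -- continuous linear maps
  let L1 : Matrix (Fin n) (Fin n) ℝ →L[ℝ] Matrix (Fin n) (Fin p) ℝ :=
    LinearMap.toContinuousLinearMap
      { toFun := fun X => X * S
        map_add' := fun X Y => Matrix.add_mul X Y S
        map_smul' := fun cc X => Matrix.smul_mul cc X S }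
  let L2 : Matrix (Fin n) (Fin n) ℝ →L[ℝ] Matrix (Fin m) (Fin n) ℝ :=
    LinearMap.toContinuousLinearMap
      { toFun := fun X => T * X
        map_add' := fun X Y => Matrix.mul_add T X Y
        map_smul' := fun cc X => Matrix.mul_smul T cc X }
  let L3 : Matrix (Fin n) (Fin n) ℝ →L[ℝ] Matrix (Fin m) (Fin p) ℝ :=
    LinearMap.toContinuousLinearMap
      { toFun := fun X => T * X * S
        map_add' := fun X Y => by rw [Matrix.mul_add, Matrix.add_mul]
        map_smul' := fun cc X => by
          simp only [RingHom.id_apply]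
          rw [Matrix.mul_smul, Matrix.smul_mul] }
  -- summable series
  have hf0 : Summable fun k : ℕ => ((Nat.factorial k : ℝ))⁻¹ • R ^ k := aux_sumA n 0 R
  have hg : Summable fun k : ℕ => ((Nat.factorial (k + 1) : ℝ))⁻¹ • R ^ k := aux_sumA n 1 R
  have hh : Summable fun k : ℕ => ((Nat.factorial (k + 2) : ℝ))⁻¹ • R ^ k := aux_sumA n 2 R
  refine ⟨hg, hh, ?_⟩
  -- block series
  set a : ℕ → Matrix (Fin n) (Fin n) ℝ :=
    fun k => ((Nat.factorial (k + 1) : ℝ))⁻¹ • R ^ (k + 1) with ha_def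
  set b : ℕ → Matrix (Fin n) (Fin p) ℝ :=
    fun k => ((Nat.factorial (k + 1) : ℝ))⁻¹ • (R ^ k * S) with hb_def
  set c : ℕ → Matrix (Fin m) (Fin n) ℝ :=
    fun k => ((Nat.factorial (k + 1) : ℝ))⁻¹ • (T * R ^ k) with hc_def
  set E : ℕ → Matrix (Fin m) (Fin p) ℝ :=
    fun k => Nat.rec U (fun j _ => T * R ^ j * S) k with hE_def
  set d : ℕ → Matrix (Fin m) (Fin p) ℝ :=
    fun k => ((Nat.factorial (k + 1) : ℝ))⁻¹ • E k with hd_def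
  have hb_eq : b = fun k => L1 (((Nat.factorial (k + 1) : ℝ))⁻¹ • R ^ k) := by
    funext k
    simp only [hb_def, L1, LinearMap.coe_toContinuousLinearMap', LinearMap.coe_mk,
      AddHom.coe_mk]
    rw [Matrix.smul_mul]
  have hc_eq : c = fun k => L2 (((Nat.factorial (k + 1) : ℝ))⁻¹ • R ^ k) := by
    funext k
    simp only [hc_def, L2, LinearMap.coe_toContinuousLinearMap', LinearMap.coe_mk,
      AddHom.coe_mk]
    rw [Matrix.mul_smul]
  have hd_succ : (fun k => d (k + 1)) =
      fun k => L3 (((Nat.factorial (k + 2) : ℝ))⁻¹ • R ^ k) := by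
    funext k
    simp only [hd_def, hE_def, L3, LinearMap.coe_toContinuousLinearMap', LinearMap.coe_mk,
      AddHom.coe_mk]
    rw [Matrix.mul_smul, Matrix.smul_mul]
  have hsa : Summable a := (summable_nat_add_iff 1).mpr hf0
  have hsb : Summable b := by rw [hb_eq]; exact hg.map L1 L1.continuous
  have hsc : Summable c := by rw [hc_eq]; exact hg.map L2 L2.continuous
  have hsd : Summable d := by
    apply (summable_nat_add_iff 1).mp
    rw [hd_succ]
    exact hh.map L3 L3.continuous
  -- structure of the terms
  have hW : structPhi n m p * Matrix.fromBlocks R S T U =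
      Matrix.fromBlocks R S (0 : Matrix (Fin p) (Fin n) ℝ) (0 : Matrix (Fin p) (Fin p) ℝ) := by
    simp [structPhi, Matrix.fromBlocks_multiply]
  have hWpow : ∀ k : ℕ,
      (Matrix.fromBlocks R S (0 : Matrix (Fin p) (Fin n) ℝ)
        (0 : Matrix (Fin p) (Fin p) ℝ)) ^ (k + 1) =
      Matrix.fromBlocks (R ^ (k + 1)) (R ^ k * S) 0 0 := by
    intro k
    induction k with
    | zero => simp
    | succ k ih =>
      rw [pow_succ, ih, Matrix.fromBlocks_multiply]
      simp [← pow_succ]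
  have hterm : ∀ k : ℕ,
      ((Nat.factorial (k + 1) : ℝ))⁻¹ •
        (Matrix.fromBlocks R S T U *
          (structPhi n m p * Matrix.fromBlocks R S T U) ^ k) =
      Matrix.fromBlocks (a k) (b k) (c k) (d k) := by
    intro k
    rw [hW]
    cases k with
    | zero =>
      simp only [pow_zero, Matrix.mul_one, ha_def, hb_def, hc_def, hd_def, hE_def]
      rw [aux_smul_fromBlocks]
      simp
    | succ j =>
      rw [hWpow j, Matrix.fromBlocks_multiply]
      simp only [Matrix.mul_zero, add_zero]
      rw [aux_smul_fromBlocks,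
        show R * R ^ (j + 1) = R ^ (j + 1 + 1) by rw [← pow_succ'],
        show R * (R ^ j * S) = R ^ (j + 1) * S by rw [← Matrix.mul_assoc, ← pow_succ'],
        show T * (R ^ j * S) = T * R ^ j * S from (Matrix.mul_assoc T _ S).symm]
  -- put it together
  have hstar : starExp n m p (Matrix.fromBlocks R S T U) =
      ∑' k : ℕ, Matrix.fromBlocks (a k) (b k) (c k) (d k) := by
    unfold starExp
    exact tsum_congr hterm
  rw [hstar, aux_tsum_fromBlocks hsa hsb hsc hsd]
  -- identify the four block sums
  have hA : (∑' k, a k) = NormedSpace.exp R - 1 := by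
    have hexp := congrFun (NormedSpace.exp_eq_tsum (𝕂 := ℝ)
      (𝔸 := Matrix (Fin n) (Fin n) ℝ)) R
    rw [hexp, Summable.tsum_eq_zero_add hf0]
    simp only [ha_def, Nat.factorial_zero, Nat.cast_one, inv_one, pow_zero, one_smul]
    abel
  have hB : (∑' k, b k) = (∑' k : ℕ, ((Nat.factorial (k + 1) : ℝ))⁻¹ • R ^ k) * S := by
    rw [hb_eq, ← L1.map_tsum hg]; rfl
  have hC : (∑' k, c k) = T * ∑' k : ℕ, ((Nat.factorial (k + 1) : ℝ))⁻¹ • R ^ k := by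
    rw [hc_eq, ← L2.map_tsum hg]; rfl
  have hD : (∑' k, d k) =
      U + T * (∑' k : ℕ, ((Nat.factorial (k + 2) : ℝ))⁻¹ • R ^ k) * S := by
    rw [Summable.tsum_eq_zero_add hsd]
    congr 1
    · simp [hd_def, hE_def]
    · rw [hd_succ, ← L3.map_tsum hh]; rfl
  rw [hA, hB, hC, hD]
end

section
/- Let X : [0,1]² → ℝ be twice continuously differentiable, satisfy X(s,0) = 0 and X(0,t) = 0 for all s, t ∈ [0,1], and not be identically zero. Then there exist natural numbers a, b such that ∫₀¹ ∫₀¹ s^a t^b ∂_s∂_t X(s,t) ds dt ≠ 0. -/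
open MeasureTheory intervalIntegral

private lemma integral_poly_mul (f : ℝ → ℝ) (hf : Continuous f)
    (h : ∀ n : ℕ, ∫ x in (0:ℝ)..1, x ^ n * f x = 0) (p : Polynomial ℝ) :
    ∫ x in (0:ℝ)..1, p.eval x * f x = 0 := by
  have hx : ∀ x : ℝ, p.eval x * f x
      = ∑ i ∈ Finset.range (p.natDegree + 1), p.coeff i * (x ^ i * f x) := by
    intro x
    rw [Polynomial.eval_eq_sum_range, Finset.sum_mul]
    simp [mul_assoc]
  simp_rw [hx]
  rw [intervalIntegral.integral_finset_sum]
  · simp [intervalIntegral.integral_const_mul, h]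
  · intro i _
    exact (continuous_const.mul ((continuous_pow i).mul hf)).intervalIntegrable _ _

private lemma moments_zero (f : ℝ → ℝ) (hf : Continuous f)
    (h : ∀ n : ℕ, ∫ x in (0:ℝ)..1, x ^ n * f x = 0) :
    ∀ x ∈ Set.Icc (0:ℝ) 1, f x = 0 := by
  set g : C(Set.Icc (0:ℝ) 1, ℝ) := ⟨fun x => f x, hf.comp continuous_subtype_val⟩ with hg
  set M := ‖g‖ with hM
  have hMnn : 0 ≤ M := norm_nonneg g
  have hbound : ∀ x ∈ Set.Icc (0:ℝ) 1, |f x| ≤ M := by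
    intro x hx
    simpa [hg] using g.norm_coe_le_norm ⟨x, hx⟩
  have key : (∫ x in (0:ℝ)..1, f x * f x) = 0 := by
    have hle : ∀ ε > (0:ℝ), |∫ x in (0:ℝ)..1, f x * f x| ≤ ε := by
      intro ε hε
      have hδ : 0 < ε / (M + 1) := by positivity
      obtain ⟨p, hp⟩ := exists_polynomial_near_continuousMap 0 1 g _ hδ
      have hclose : ∀ x ∈ Set.Icc (0:ℝ) 1, |f x - p.eval x| ≤ ε / (M + 1) := by
        intro x hx
        have h1 := (p.toContinuousMapOn (Set.Icc (0:ℝ) 1) - g).norm_coe_le_norm ⟨x, hx⟩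
        have h2 := h1.trans hp.le
        rw [abs_sub_comm]
        simpa [hg, Real.norm_eq_abs] using h2
      have hrw : (∫ x in (0:ℝ)..1, f x * f x)
          = ∫ x in (0:ℝ)..1, (f x - p.eval x) * f x := by
        have : ∀ x : ℝ, (f x - p.eval x) * f x = f x * f x - p.eval x * f x := by
          intro x; ring
        simp_rw [this]
        rw [intervalIntegral.integral_sub (f := fun x => f x * f x) (g := fun x => p.eval x * f x) ((hf.mul hf).intervalIntegrable _ _)
          (((Polynomial.continuous p).mul hf).intervalIntegrable _ _)]
        · rw [integral_poly_mul f hf h p, sub_zero]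
      rw [hrw]
      have hb : ∀ x ∈ Set.uIoc (0:ℝ) 1, ‖(f x - p.eval x) * f x‖ ≤ ε / (M + 1) * M := by
        intro x hx
        have hx' : x ∈ Set.Icc (0:ℝ) 1 := by
          rw [Set.uIoc_of_le (by norm_num : (0:ℝ) ≤ 1)] at hx
          exact Set.Ioc_subset_Icc_self hx
        rw [Real.norm_eq_abs, abs_mul]
        exact mul_le_mul (hclose x hx') (hbound x hx') (abs_nonneg _) hδ.le
      have := intervalIntegral.norm_integral_le_of_norm_le_const hb
      simp only [Real.norm_eq_abs] at this
      have h2 : ε / (M + 1) * M ≤ ε := by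
        rw [div_mul_eq_mul_div, div_le_iff₀ (by linarith)]
        nlinarith
      calc |∫ x in (0:ℝ)..1, (f x - p.eval x) * f x|
          ≤ ε / (M + 1) * M * |1 - 0| := this
        _ = ε / (M + 1) * M := by norm_num
        _ ≤ ε := h2
    have h0 : |∫ x in (0:ℝ)..1, f x * f x| ≤ 0 := by
      by_contra h'
      push_neg at h'
      have := hle (|∫ x in (0:ℝ)..1, f x * f x| / 2) (by linarith)
      linarith
    have := abs_nonneg (∫ x in (0:ℝ)..1, f x * f x)
    exact abs_eq_zero.mp (le_antisymm h0 this)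
  have hae := (intervalIntegral.integral_eq_zero_iff_of_le_of_nonneg_ae
    (by norm_num : (0:ℝ) ≤ 1)
    (Filter.Eventually.of_forall fun x => mul_self_nonneg (f x))
    ((hf.mul hf).intervalIntegrable _ _)).mp key
  have hae' : (fun x => f x * f x) =ᵐ[volume.restrict (Set.Icc (0:ℝ) 1)] 0 := by
    rwa [Measure.restrict_congr_set Ioc_ae_eq_Icc] at hae
  have heq : Set.EqOn (fun x => f x * f x) 0 (Set.Icc (0:ℝ) 1) := by
    apply Measure.eqOn_of_ae_eq hae' (hf.mul hf).continuousOn continuousOn_const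
    rw [interior_Icc, closure_Ioo (by norm_num : (0:ℝ) ≠ 1)]
  intro x hx
  exact mul_self_eq_zero.mp (heq hx)

/-- If `X : ℝ × ℝ → ℝ` is `C²`, vanishes on the two axes `{t = 0}` and
`{s = 0}` inside the unit square, and is not identically zero on the square, then some
moment `∫₀¹∫₀¹ sᵃ tᵇ ∂ₛ∂ₜX(s,t) ds dt` of the mixed second partial derivative is nonzero. -/
theorem exists_nonzero_polynomial_moment
    (X : ℝ × ℝ → ℝ) (hX : ContDiff ℝ 2 X)
    (hs0 : ∀ s ∈ Set.Icc (0:ℝ) 1, X (s, 0) = 0)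
    (h0t : ∀ t ∈ Set.Icc (0:ℝ) 1, X (0, t) = 0)
    (hne : ∃ s ∈ Set.Icc (0:ℝ) 1, ∃ t ∈ Set.Icc (0:ℝ) 1, X (s, t) ≠ 0) :
    ∃ a b : ℕ,
      (∫ s in (0:ℝ)..1, ∫ t in (0:ℝ)..1,
        s ^ a * t ^ b * deriv (fun σ => deriv (fun τ => X (σ, τ)) t) s) ≠ 0 := by
  by_contra hmom
  push_neg at hmom
  -- the first partial derivative in the second variable
  set f1 : ℝ × ℝ → ℝ := fun p => fderiv ℝ X p (0, 1) with hf1def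
  -- the mixed second partial derivative
  set F : ℝ × ℝ → ℝ := fun p => fderiv ℝ f1 p (1, 0) with hFdef
  have hXd : Differentiable ℝ X := hX.differentiable (by norm_num)
  have hf1C : ContDiff ℝ 1 f1 :=
    (hX.fderiv_right (by norm_num)).clm_apply contDiff_const
  have hf1d : Differentiable ℝ f1 := hf1C.differentiable one_ne_zero
  have hFc : Continuous F := by
    have h1 : Continuous (fderiv ℝ f1) := hf1C.continuous_fderiv one_ne_zero
    exact ((ContinuousLinearMap.apply ℝ ℝ ((1:ℝ), (0:ℝ))).continuous).comp h1
  -- derivative identities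
  have hdt : ∀ σ t : ℝ, HasDerivAt (fun τ => X (σ, τ)) (f1 (σ, t)) t := by
    intro σ t
    have h1 : HasDerivAt (fun τ : ℝ => ((σ, τ) : ℝ × ℝ)) (0, 1) t :=
      HasDerivAt.prodMk (hasDerivAt_const t σ) (hasDerivAt_id t)
    exact (hXd (σ, t)).hasFDerivAt.comp_hasDerivAt t h1
  have hds : ∀ s t : ℝ, HasDerivAt (fun σ => f1 (σ, t)) (F (s, t)) s := by
    intro s t
    have h1 : HasDerivAt (fun σ : ℝ => ((σ, t) : ℝ × ℝ)) (1, 0) s :=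
      HasDerivAt.prodMk (hasDerivAt_id s) (hasDerivAt_const s t)
    exact (hf1d (s, t)).hasFDerivAt.comp_hasDerivAt s h1
  have hderiv_eq : ∀ s t : ℝ,
      deriv (fun σ => deriv (fun τ => X (σ, τ)) t) s = F (s, t) := by
    intro s t
    have h1 : (fun σ => deriv (fun τ => X (σ, τ)) t) = fun σ => f1 (σ, t) := by
      funext σ; exact (hdt σ t).deriv
    rw [h1]
    exact (hds s t).deriv
  -- moments of F all vanish
  have hmomF : ∀ a b : ℕ,
      (∫ s in (0:ℝ)..1, s ^ a * ∫ t in (0:ℝ)..1, t ^ b * F (s, t)) = 0 := by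
    intro a b
    have := hmom a b
    simp_rw [hderiv_eq] at this
    rw [← this]
    congr 1
    funext s
    rw [← intervalIntegral.integral_const_mul]
    congr 1
    funext t
    ring
  -- continuity of the inner integral as a function of s
  have hGcont : ∀ b : ℕ, Continuous fun s => ∫ t in (0:ℝ)..1, t ^ b * F (s, t) := by
    intro b
    apply intervalIntegral.continuous_parametric_intervalIntegral_of_continuous'
    exact (continuous_snd.pow b).mul (hFc.comp (continuous_fst.prodMk continuous_snd))
  -- F vanishes on the unit square
  have hF0 : ∀ s ∈ Set.Icc (0:ℝ) 1, ∀ t ∈ Set.Icc (0:ℝ) 1, F (s, t) = 0 := by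
    intro s hs t ht
    have hG0 : ∀ b : ℕ, (∫ t in (0:ℝ)..1, t ^ b * F (s, t)) = 0 := by
      intro b
      exact moments_zero _ (hGcont b) (fun a => hmomF a b) s hs
    exact moments_zero _ (hFc.comp (continuous_const.prodMk continuous_id))
      hG0 t ht
  -- f1 (0, τ) = 0 for τ ∈ [0,1]
  have hf10 : ∀ τ ∈ Set.Icc (0:ℝ) 1, f1 (0, τ) = 0 := by
    have hIoo : ∀ τ ∈ Set.Ioo (0:ℝ) 1, f1 (0, τ) = 0 := by
      intro τ hτ
      have hev : (fun τ' => X (0, τ')) =ᶠ[nhds τ] fun _ => (0:ℝ) :=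
        Filter.eventuallyEq_of_mem (isOpen_Ioo.mem_nhds hτ)
          (fun y hy => h0t y (Set.Ioo_subset_Icc_self hy))
      have h0 : HasDerivAt (fun τ' => X (0, τ')) 0 τ :=
        (hasDerivAt_const τ (0:ℝ)).congr_of_eventuallyEq hev
      exact ((hdt 0 τ).unique h0)
    have hcont : ContinuousOn (fun τ => f1 (0, τ)) (Set.Icc (0:ℝ) 1) :=
      (hf1C.continuous.comp (continuous_const.prodMk continuous_id)).continuousOn
    have hc : Continuous fun τ => f1 (0, τ) :=
      hf1C.continuous.comp (continuous_const.prodMk continuous_id)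
    have h1 : Set.EqOn (fun τ => f1 (0, τ)) 0 (Set.Ioo (0:ℝ) 1) := fun τ hτ => hIoo τ hτ
    have h2 : Set.EqOn (fun τ => f1 (0, τ)) 0 (closure (Set.Ioo (0:ℝ) 1)) :=
      h1.closure hc continuous_const
    intro τ hτ
    exact h2 (by rwa [closure_Ioo (by norm_num : (0:ℝ) ≠ 1)])
  -- f1 vanishes on the unit square
  have hf1sq : ∀ σ ∈ Set.Icc (0:ℝ) 1, ∀ τ ∈ Set.Icc (0:ℝ) 1, f1 (σ, τ) = 0 := by
    intro σ hσ τ hτ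
    have hFTC : (∫ u in (0:ℝ)..σ, F (u, τ)) = f1 (σ, τ) - f1 (0, τ) := by
      apply intervalIntegral.integral_eq_sub_of_hasDerivAt
      · intro u _
        exact hds u τ
      · exact (hFc.comp (continuous_id.prodMk continuous_const)).intervalIntegrable _ _
    have hzero : (∫ u in (0:ℝ)..σ, F (u, τ)) = 0 := by
      rw [intervalIntegral.integral_congr (g := fun _ => (0:ℝ))]
      · simp
      · intro u hu
        rw [Set.uIcc_of_le hσ.1] at hu
        exact hF0 u ⟨hu.1, hu.2.trans hσ.2⟩ τ hτ
    rw [hzero] at hFTC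
    rw [hf10 τ hτ, sub_zero] at hFTC
    exact hFTC.symm
  -- X vanishes on the unit square, contradiction
  obtain ⟨s, hs, t, ht, hXst⟩ := hne
  apply hXst
  have hFTC : (∫ τ in (0:ℝ)..t, f1 (s, τ)) = X (s, t) - X (s, 0) := by
    apply intervalIntegral.integral_eq_sub_of_hasDerivAt
    · intro τ _
      exact hdt s τ
    · exact (hf1C.continuous.comp (continuous_const.prodMk continuous_id)).intervalIntegrable _ _
  have hzero : (∫ τ in (0:ℝ)..t, f1 (s, τ)) = 0 := by
    rw [intervalIntegral.integral_congr (g := fun _ => (0:ℝ))]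
    · simp
    · intro τ hτ
      rw [Set.uIcc_of_le ht.1] at hτ
      exact hf1sq s hs τ ⟨hτ.1, hτ.2.trans ht.2⟩
  rw [hzero, hs0 s hs] at hFTC
  linarith [hFTC]
end

section
/- Let p ≥ 1 and let X : [0,1]² → ℝ^d be continuous. For every t ∈ [0,1] and every 0 ≤ s < s' ≤ 1, the 1D p-variation of the horizontal path r ↦ X(r,t) over [s,s'] satisfies |X(·,t)|^p_{p;[s,s']} ≤ 2^{p−1}·( |X|^p_{p;[s,s']×[0,1]} + |X(·,0)|^p_{p;[s,s']} ), where |X|_{p;R} is the controlled 2D p-variation of X over the rectangle R (the inequality is understood in the extended nonnegative reals). -/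
open scoped ENNReal

/-- The `p`-th power of the 1D `p`-variation of `x : ℝ → E` over `[s,s']`:
the supremum, over all finite monotone partitions `s = r₀ ≤ r₁ ≤ ... ≤ r_k = s'`, of
`∑ᵢ ‖x(rᵢ₊₁) − x(rᵢ)‖^p`, valued in `ℝ≥0∞`. -/
noncomputable def oneVarPow {E : Type*} [NormedAddCommGroup E]
    (p : ℝ) (x : ℝ → E) (s s' : ℝ) : ℝ≥0∞ :=
  ⨆ (k : ℕ) (r : Fin (k + 1) → ℝ) (_ : Monotone r) (_ : r 0 = s) (_ : r (Fin.last k) = s'),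
    ∑ i : Fin k, (‖x (r i.succ) - x (r i.castSucc)‖₊ : ℝ≥0∞) ^ p

/-- The 1D `p`-variation `|x|_{p;[s,s']}`, i.e. the `1/p`-th power of `oneVarPow`. -/
noncomputable def oneVar {E : Type*} [NormedAddCommGroup E]
    (p : ℝ) (x : ℝ → E) (s s' : ℝ) : ℝ≥0∞ :=
  oneVarPow p x s s' ^ (1 / p)

/-- A closed axis-parallel rectangle `[s,s']×[t,t']` in the plane. -/
structure Rect where
  s : ℝ
  s' : ℝ
  t : ℝ
  t' : ℝ

/-- The subset of the plane determined by a rectangle. -/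
def Rect.toSet (r : Rect) : Set (ℝ × ℝ) := Set.Icc r.s r.s' ×ˢ Set.Icc r.t r.t'

/-- The unit square `[0,1]²`. -/
def unitRect : Rect := ⟨0, 1, 0, 1⟩

/-- The 2D increment `□_R[X] := X(s,t) − X(s',t) − X(s,t') + X(s',t')` of `X` over the
rectangle `R = [s,s']×[t,t']`. -/
def boxInc {E : Type*} [NormedAddCommGroup E] (X : ℝ → ℝ → E) (r : Rect) : E :=
  X r.s r.t - X r.s' r.t - X r.s r.t' + X r.s' r.t'

/-- `π : Fin K → Rect` is a rectangle partition of `R`: a finite collection of closed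
subrectangles with pairwise disjoint interiors whose union is `R`. -/
def IsRectPartition (R : Rect) {K : ℕ} (π : Fin K → Rect) : Prop :=
  (∀ i, (π i).s ≤ (π i).s' ∧ (π i).t ≤ (π i).t') ∧
  (∀ i j, i ≠ j → interior (π i).toSet ∩ interior (π j).toSet = ∅) ∧
  (⋃ i, (π i).toSet) = R.toSet

/-- The `p`-th power of the controlled 2D `p`-variation of `X` over the rectangle `R`:
the supremum over all rectangle partitions `π` of `R` of `∑_{r ∈ π} ‖□_r[X]‖^p`. -/
noncomputable def cVarPow {E : Type*} [NormedAddCommGroup E]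
    (p : ℝ) (X : ℝ → ℝ → E) (R : Rect) : ℝ≥0∞ :=
  ⨆ (K : ℕ) (π : Fin K → Rect) (_ : IsRectPartition R π),
    ∑ i, (‖boxInc X (π i)‖₊ : ℝ≥0∞) ^ p

/-- The controlled 2D `p`-variation `|X|_{p;R}`, i.e. the `1/p`-th power of `cVarPow`. -/
noncomputable def cVar {E : Type*} [NormedAddCommGroup E]
    (p : ℝ) (X : ℝ → ℝ → E) (R : Rect) : ℝ≥0∞ :=
  cVarPow p X R ^ (1 / p)

/-- The `p`-th power of the grid 2D `p`-variation of `X` over the rectangle `R`: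
the supremum over all grid-like partitions of `∑_{i,j} ‖□_{[σᵢ,σᵢ₊₁]×[τⱼ,τⱼ₊₁]}[X]‖^p`. -/
noncomputable def gridVarPow {E : Type*} [NormedAddCommGroup E]
    (p : ℝ) (X : ℝ → ℝ → E) (R : Rect) : ℝ≥0∞ :=
  ⨆ (n : ℕ) (m : ℕ) (σ : Fin (n + 1) → ℝ) (τ : Fin (m + 1) → ℝ)
    (_ : Monotone σ) (_ : Monotone τ)
    (_ : σ 0 = R.s) (_ : σ (Fin.last n) = R.s')
    (_ : τ 0 = R.t) (_ : τ (Fin.last m) = R.t'),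
    ∑ i : Fin n, ∑ j : Fin m,
      (‖boxInc X ⟨σ i.castSucc, σ i.succ, τ j.castSucc, τ j.succ⟩‖₊ : ℝ≥0∞) ^ p

/-- The grid 2D `p`-variation `V_p(X;R)`, i.e. the `1/p`-th power of `gridVarPow`. -/
noncomputable def gridVar {E : Type*} [NormedAddCommGroup E]
    (p : ℝ) (X : ℝ → ℝ → E) (R : Rect) : ℝ≥0∞ :=
  gridVarPow p X R ^ (1 / p)

/-- The supremum norm `sup_{[0,1]²} ‖X‖`, valued in `ℝ≥0∞`. -/
noncomputable def supNormSq {E : Type*} [NormedAddCommGroup E] (X : ℝ → ℝ → E) : ℝ≥0∞ :=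
  ⨆ (s ∈ Set.Icc (0:ℝ) 1) (t ∈ Set.Icc (0:ℝ) 1), (‖X s t‖₊ : ℝ≥0∞)

/-- The controlled `p`-variation norm
`‖X‖_{p-cvar} := sup ‖X‖ + |X(·,0)|_p + |X(0,·)|_p + |X|_{p;[0,1]²}`. -/
noncomputable def cvarNorm {E : Type*} [NormedAddCommGroup E]
    (p : ℝ) (X : ℝ → ℝ → E) : ℝ≥0∞ :=
  supNormSq X + oneVar p (fun s => X s 0) 0 1 + oneVar p (fun t => X 0 t) 0 1 +
    cVar p X unitRect

/-- The `p`-variation norm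
`‖X‖_{p-var} := sup ‖X‖ + |X(·,0)|_p + |X(0,·)|_p + V_p(X;[0,1]²)`. -/
noncomputable def varNorm {E : Type*} [NormedAddCommGroup E]
    (p : ℝ) (X : ℝ → ℝ → E) : ℝ≥0∞ :=
  supNormSq X + oneVar p (fun s => X s 0) 0 1 + oneVar p (fun t => X 0 t) 0 1 +
    gridVar p X unitRect

lemma aux_cover {m : ℕ} (r : Fin (m + 2) → ℝ) (hmono : Monotone r)
    (x : ℝ) (hx1 : r 0 ≤ x) (hx2 : x ≤ r (Fin.last (m + 1))) :
    ∃ i : Fin (m + 1), r i.castSucc ≤ x ∧ x ≤ r i.succ := by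
  classical
  set F := Finset.univ.filter (fun i : Fin (m + 2) => r i ≤ x) with hF
  have hFne : F.Nonempty := ⟨0, by simp [hF, hx1]⟩
  set i₀ := F.max' hFne with hi₀def
  have hi₀ : r i₀ ≤ x := by
    have := F.max'_mem hFne
    simpa [hF] using this
  by_cases hlast : i₀ = Fin.last (m + 1)
  · rw [hlast] at hi₀
    refine ⟨Fin.last m, le_trans (hmono (Fin.le_last _)) hi₀, ?_⟩
    rw [Fin.succ_last]; exact hx2
  · obtain ⟨j, hj⟩ := Fin.exists_castSucc_eq.mpr hlast
    refine ⟨j, by rw [hj]; exact hi₀, ?_⟩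
    have hnotF : j.succ ∉ F := by
      intro hmem
      have h1 : j.succ ≤ i₀ := F.le_max' _ hmem
      rw [← hj] at h1
      exact absurd h1 (not_le.mpr (Fin.castSucc_lt_succ (i := j)))
    have : ¬ r j.succ ≤ x := by simpa [hF] using hnotF
    exact (not_le.mp this).le

lemma aux_Ioo_disj {m : ℕ} (r : Fin (m + 2) → ℝ) (hmono : Monotone r)
    {i j : Fin (m + 1)} (hij : i < j) :
    Set.Ioo (r i.castSucc) (r i.succ) ∩ Set.Ioo (r j.castSucc) (r j.succ) = ∅ := by
  apply Set.eq_empty_of_forall_notMem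
  rintro x ⟨⟨_, hx1⟩, hx2, _⟩
  have : r i.succ ≤ r j.castSucc := hmono (Fin.succ_le_castSucc_iff.mpr hij)
  linarith


/-- For continuous `X : [0,1]² → ℝ^d`, `p ≥ 1`, `t ∈ [0,1]` and
`0 ≤ s < s' ≤ 1`, the `p`-th power of the 1D `p`-variation of the horizontal path
`r ↦ X(r,t)` over `[s,s']` is at most
`2^{p−1}·(|X|^p_{p;[s,s']×[0,1]} + |X(·,0)|^p_{p;[s,s']})` (in `ℝ≥0∞`). -/
theorem horizontal_path_variation_le
    (d : ℕ) (p : ℝ) (hp : 1 ≤ p)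
    (X : ℝ → ℝ → EuclideanSpace ℝ (Fin d))
    (hcont : ContinuousOn (fun z : ℝ × ℝ => X z.1 z.2) (Set.Icc 0 1 ×ˢ Set.Icc 0 1))
    (t : ℝ) (ht : t ∈ Set.Icc (0:ℝ) 1)
    (s s' : ℝ) (hs0 : 0 ≤ s) (hss : s < s') (hs1 : s' ≤ 1) :
    oneVarPow p (fun r => X r t) s s' ≤
      (2 : ℝ≥0∞) ^ (p - 1) *
        (cVarPow p X ⟨s, s', 0, 1⟩ + oneVarPow p (fun r => X r 0) s s') := by
  refine iSup_le fun k => iSup_le fun r => iSup_le fun hmono => iSup_le fun hr0 =>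
    iSup_le fun hrl => ?_
  rcases Nat.eq_zero_or_pos k with rfl | hk
  · simp
  obtain ⟨m, rfl⟩ : ∃ m, k = m + 1 := ⟨k - 1, (Nat.succ_pred_eq_of_pos hk).symm⟩
  have h0t : (0 : ℝ) ≤ t := ht.1
  have ht1 : t ≤ 1 := ht.2
  have hp0 : (0 : ℝ) ≤ p := le_trans zero_le_one hp
  set bot : Fin (m + 1) → Rect := fun i => ⟨r i.castSucc, r i.succ, 0, t⟩ with hbot
  set top : Fin (m + 1) → Rect := fun i => ⟨r i.castSucc, r i.succ, t, 1⟩ with htop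
  set π : Fin ((m + 1) + (m + 1)) → Rect :=
    fun i => Sum.elim bot top (finSumFinEquiv.symm i) with hπ
  have key : ∀ i : Fin (m + 1),
      (‖X (r i.succ) t - X (r i.castSucc) t‖₊ : ℝ≥0∞) ^ p ≤
        (2 : ℝ≥0∞) ^ (p - 1) * ((‖boxInc X (bot i)‖₊ : ℝ≥0∞) ^ p +
          (‖X (r i.succ) 0 - X (r i.castSucc) 0‖₊ : ℝ≥0∞) ^ p) := by
    intro i
    have hdec : X (r i.succ) t - X (r i.castSucc) t =
        boxInc X (bot i) + (X (r i.succ) 0 - X (r i.castSucc) 0) := by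
      simp only [hbot, boxInc]
      abel
    calc (‖X (r i.succ) t - X (r i.castSucc) t‖₊ : ℝ≥0∞) ^ p
        ≤ ((‖boxInc X (bot i)‖₊ : ℝ≥0∞) +
            (‖X (r i.succ) 0 - X (r i.castSucc) 0‖₊ : ℝ≥0∞)) ^ p := by
          apply ENNReal.rpow_le_rpow _ hp0
          rw [hdec, ← ENNReal.coe_add]
          exact_mod_cast nnnorm_add_le _ _
      _ ≤ _ := ENNReal.rpow_add_le_mul_rpow_add_rpow _ _ hp
  have hvert : Set.Ioo (0 : ℝ) t ∩ Set.Ioo t 1 = ∅ := by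
    apply Set.eq_empty_of_forall_notMem
    rintro x ⟨⟨_, h1⟩, h2, _⟩
    linarith
  have hIoo : ∀ i j : Fin (m + 1), i ≠ j →
      Set.Ioo (r i.castSucc) (r i.succ) ∩ Set.Ioo (r j.castSucc) (r j.succ) = ∅ := by
    intro i j hij
    rcases hij.lt_or_gt with h | h
    · exact aux_Ioo_disj r hmono h
    · rw [Set.inter_comm]; exact aux_Ioo_disj r hmono h
  have hpart : IsRectPartition ⟨s, s', 0, 1⟩ π := by
    refine ⟨?_, ?_, ?_⟩
    · intro i
      rcases h : finSumFinEquiv.symm i with a | a <;>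
        simp only [hπ, h, Sum.elim_inl, Sum.elim_inr, hbot, htop] <;>
        exact ⟨hmono (Fin.castSucc_le_succ a), by linarith⟩
    · intro i j hij
      have hne : finSumFinEquiv.symm i ≠ finSumFinEquiv.symm j :=
        fun h => hij (finSumFinEquiv.symm.injective h)
      rcases h1 : finSumFinEquiv.symm i with a | a <;>
        rcases h2 : finSumFinEquiv.symm j with b | b <;>
        rw [h1, h2] at hne <;>
        simp only [hπ, h1, h2, Sum.elim_inl, Sum.elim_inr, hbot, htop, Rect.toSet,
          interior_prod_eq, interior_Icc, Set.prod_inter_prod, Set.prod_eq_empty_iff]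
      · exact Or.inl (hIoo a b fun h => hne (by rw [h]))
      · exact Or.inr hvert
      · exact Or.inr (by rw [Set.inter_comm]; exact hvert)
      · exact Or.inl (hIoo a b fun h => hne (by rw [h]))
    · have he : (⋃ i, (π i).toSet) =
          (⋃ a, (bot a).toSet) ∪ ⋃ a, (top a).toSet := by
        ext z
        simp only [Set.mem_iUnion, Set.mem_union, hπ]
        constructor
        · rintro ⟨i, hi⟩
          rcases h : finSumFinEquiv.symm i with a | a <;> rw [h] at hi
          · exact Or.inl ⟨a, hi⟩
          · exact Or.inr ⟨a, hi⟩
        · rintro (⟨a, ha⟩ | ⟨a, ha⟩)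
          · exact ⟨finSumFinEquiv (Sum.inl a), by rw [Equiv.symm_apply_apply]; exact ha⟩
          · exact ⟨finSumFinEquiv (Sum.inr a), by rw [Equiv.symm_apply_apply]; exact ha⟩
      rw [he]
      ext ⟨x, y⟩
      simp only [Set.mem_union, Set.mem_iUnion, Rect.toSet, Set.mem_prod, Set.mem_Icc,
        hbot, htop]
      constructor
      · rintro (⟨a, ⟨hx1, hx2⟩, hy1, hy2⟩ | ⟨a, ⟨hx1, hx2⟩, hy1, hy2⟩) <;>
          refine ⟨⟨?_, ?_⟩, ?_, ?_⟩
        · calc s = r 0 := hr0.symm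
            _ ≤ r a.castSucc := hmono (Fin.zero_le _)
            _ ≤ x := hx1
        · calc x ≤ r a.succ := hx2
            _ ≤ r (Fin.last (m + 1)) := hmono (Fin.le_last _)
            _ = s' := hrl
        · exact hy1
        · linarith
        · calc s = r 0 := hr0.symm
            _ ≤ r a.castSucc := hmono (Fin.zero_le _)
            _ ≤ x := hx1
        · calc x ≤ r a.succ := hx2
            _ ≤ r (Fin.last (m + 1)) := hmono (Fin.le_last _)
            _ = s' := hrl
        · linarith
        · exact hy2
      · rintro ⟨⟨hx1, hx2⟩, hy1, hy2⟩
        obtain ⟨a, ha1, ha2⟩ := aux_cover r hmono x (hr0 ▸ hx1) (hrl ▸ hx2)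
        rcases le_total y t with hyt | hty
        · exact Or.inl ⟨a, ⟨ha1, ha2⟩, hy1, hyt⟩
        · exact Or.inr ⟨a, ⟨ha1, ha2⟩, hty, hy2⟩
  have hA : ∑ i : Fin (m + 1), (‖boxInc X (bot i)‖₊ : ℝ≥0∞) ^ p ≤
      cVarPow p X ⟨s, s', 0, 1⟩ := by
    have hsum : ∑ i : Fin ((m + 1) + (m + 1)), (‖boxInc X (π i)‖₊ : ℝ≥0∞) ^ p =
        (∑ a : Fin (m + 1), (‖boxInc X (bot a)‖₊ : ℝ≥0∞) ^ p) +
          ∑ a : Fin (m + 1), (‖boxInc X (top a)‖₊ : ℝ≥0∞) ^ p := by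
      have heq := Fintype.sum_equiv finSumFinEquiv
        (fun a : Fin (m + 1) ⊕ Fin (m + 1) => (‖boxInc X (Sum.elim bot top a)‖₊ : ℝ≥0∞) ^ p)
        (fun i => (‖boxInc X (π i)‖₊ : ℝ≥0∞) ^ p)
        (fun a => by simp [hπ])
      rw [← heq, Fintype.sum_sum_type]
      simp
    calc ∑ i : Fin (m + 1), (‖boxInc X (bot i)‖₊ : ℝ≥0∞) ^ p
        ≤ ∑ i : Fin ((m + 1) + (m + 1)), (‖boxInc X (π i)‖₊ : ℝ≥0∞) ^ p := by
          rw [hsum]; exact le_self_add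
      _ ≤ cVarPow p X ⟨s, s', 0, 1⟩ :=
          le_iSup_of_le ((m + 1) + (m + 1)) (le_iSup_of_le π (le_iSup_of_le hpart le_rfl))
  have hB : ∑ i : Fin (m + 1), (‖X (r i.succ) 0 - X (r i.castSucc) 0‖₊ : ℝ≥0∞) ^ p ≤
      oneVarPow p (fun r => X r 0) s s' :=
    le_iSup_of_le (m + 1) (le_iSup_of_le r (le_iSup_of_le hmono
      (le_iSup_of_le hr0 (le_iSup_of_le hrl le_rfl))))
  calc ∑ i : Fin (m + 1), (‖X (r i.succ) t - X (r i.castSucc) t‖₊ : ℝ≥0∞) ^ p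
      ≤ ∑ i : Fin (m + 1), (2 : ℝ≥0∞) ^ (p - 1) * ((‖boxInc X (bot i)‖₊ : ℝ≥0∞) ^ p +
          (‖X (r i.succ) 0 - X (r i.castSucc) 0‖₊ : ℝ≥0∞) ^ p) :=
        Finset.sum_le_sum fun i _ => key i
    _ = (2 : ℝ≥0∞) ^ (p - 1) *
        ((∑ i : Fin (m + 1), (‖boxInc X (bot i)‖₊ : ℝ≥0∞) ^ p) +
          ∑ i : Fin (m + 1), (‖X (r i.succ) 0 - X (r i.castSucc) 0‖₊ : ℝ≥0∞) ^ p) := by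
        rw [← Finset.mul_sum, Finset.sum_add_distrib]
    _ ≤ _ := by gcongr
end

section
/- Let p ≥ 1. There exists a constant C > 0, depending only on p, such that for all continuous X, Y : [0,1]² → ℝ with finite controlled p-variation norm, the pointwise product Z(s,t) := X(s,t)·Y(s,t) has finite p-variation norm and ‖Z‖_{p-var} ≤ C·‖X‖_{p-cvar}·‖Y‖_{p-cvar}. -/
open scoped ENNReal

lemma root_le_imp {p : ℝ} (hp0 : 0 < p) {x A : ℝ≥0∞} (h : x ^ (1/p) ≤ A) : x ≤ A ^ p := by
  have h2 := ENNReal.rpow_le_rpow h hp0.le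
  rwa [← ENNReal.rpow_mul, one_div_mul_cancel hp0.ne', ENNReal.rpow_one] at h2

lemma sum_rpow_le {p : ℝ} (hp : 1 ≤ p) {ι : Type*} (s : Finset ι) (f : ι → ℝ≥0∞) :
    (∑ i ∈ s, f i) ^ p ≤ (s.card : ℝ≥0∞) ^ p * ∑ i ∈ s, (f i) ^ p := by
  have hp0 : 0 < p := lt_of_lt_of_le one_pos hp
  set T : ℝ≥0∞ := ∑ i ∈ s, (f i) ^ p with hT
  have h1 : ∀ i ∈ s, f i ≤ T ^ (1/p) := by
    intro i hi
    have : (f i) ^ p ≤ T := Finset.single_le_sum (f := fun i => (f i)^p) (fun _ _ => zero_le) hi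
    have h2 := ENNReal.rpow_le_rpow this (by positivity : (0:ℝ) ≤ 1/p)
    rwa [← ENNReal.rpow_mul, mul_one_div_cancel hp0.ne', ENNReal.rpow_one] at h2
  have h2 : (∑ i ∈ s, f i) ≤ (s.card : ℝ≥0∞) * T ^ (1/p) := by
    calc (∑ i ∈ s, f i) ≤ ∑ _i ∈ s, T ^ (1/p) := Finset.sum_le_sum h1
    _ = (s.card : ℝ≥0∞) * T ^ (1/p) := by rw [Finset.sum_const, nsmul_eq_mul]
  calc (∑ i ∈ s, f i) ^ p ≤ ((s.card : ℝ≥0∞) * T ^ (1/p)) ^ p := ENNReal.rpow_le_rpow h2 hp0.le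
  _ = (s.card : ℝ≥0∞) ^ p * T := by
      rw [ENNReal.mul_rpow_of_nonneg _ _ hp0.le, ← ENNReal.rpow_mul,
        one_div_mul_cancel hp0.ne', ENNReal.rpow_one]

lemma two_rpow_le {p : ℝ} (hp : 1 ≤ p) (x y : ℝ≥0∞) :
    (x + y) ^ p ≤ 2 ^ p * (x ^ p + y ^ p) := by
  have := sum_rpow_le hp (Finset.univ : Finset (Fin 2)) ![x, y]
  simpa [Fin.sum_univ_succ] using this

lemma nine_rpow_le {p : ℝ} (hp : 1 ≤ p) (t1 t2 t3 t4 t5 t6 t7 t8 t9 : ℝ≥0∞) :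
    (t1 + t2 + t3 + t4 + t5 + t6 + t7 + t8 + t9) ^ p ≤
      9 ^ p * (t1^p + t2^p + t3^p + t4^p + t5^p + t6^p + t7^p + t8^p + t9^p) := by
  have := sum_rpow_le hp (Finset.univ : Finset (Fin 9)) ![t1,t2,t3,t4,t5,t6,t7,t8,t9]
  simpa [Fin.sum_univ_succ, add_assoc] using this

lemma exists_cell {n : ℕ} {σ : Fin (n+1) → ℝ} (hm : Monotone σ) {x : ℝ}
    (hn : 0 < n) (hx : σ 0 ≤ x) (hx' : x ≤ σ (Fin.last n)) :
    ∃ i : Fin n, σ i.castSucc ≤ x ∧ x ≤ σ i.succ := by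
  classical
  set S : Finset (Fin (n+1)) := Finset.univ.filter (fun i => σ i ≤ x) with hS
  have h0S : (0 : Fin (n+1)) ∈ S := by simp [hS, hx]
  have hSne : S.Nonempty := ⟨0, h0S⟩
  set i₁ := S.max' hSne with hi₁
  have hi₁S : i₁ ∈ S := S.max'_mem hSne
  have hσi₁ : σ i₁ ≤ x := by simpa [hS] using hi₁S
  by_cases hlast : i₁ = Fin.last n
  · -- x = σ last
    have hxlast : x = σ (Fin.last n) := le_antisymm hx' (hlast ▸ hσi₁)
    refine ⟨⟨n-1, Nat.sub_lt hn one_pos⟩, ?_, ?_⟩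
    · have : (⟨n-1, Nat.sub_lt hn one_pos⟩ : Fin n).castSucc ≤ Fin.last n := Fin.le_last _
      exact hxlast ▸ hm this
    · have hsucc : (⟨n-1, Nat.sub_lt hn one_pos⟩ : Fin n).succ = Fin.last n := by
        ext; simp; omega
      rw [hsucc, ← hxlast]
  · obtain ⟨i, hi⟩ : ∃ i : Fin n, i.castSucc = i₁ := ⟨i₁.castPred hlast, Fin.castSucc_castPred _ _⟩
    refine ⟨i, hi ▸ hσi₁, ?_⟩
    by_contra hcon
    push_neg at hcon
    have hmem : i.succ ∈ S := by simp [hS, hcon.le]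
    have := S.le_max' _ hmem
    have h2 : i.castSucc < i.succ := Fin.castSucc_lt_succ
    rw [hi] at h2
    exact absurd this (not_le.mpr h2)
    

lemma iUnion_Icc_eq {n : ℕ} (hn : 0 < n) {σ : Fin (n+1) → ℝ} (hm : Monotone σ) :
    (⋃ i : Fin n, Set.Icc (σ i.castSucc) (σ i.succ)) = Set.Icc (σ 0) (σ (Fin.last n)) := by
  apply le_antisymm
  · refine Set.iUnion_subset fun i => Set.Icc_subset_Icc (hm (Fin.zero_le _)) (hm (Fin.le_last _))
  · intro x hx
    obtain ⟨i, h1, h2⟩ := exists_cell hm hn hx.1 hx.2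
    exact Set.mem_iUnion.2 ⟨i, h1, h2⟩

lemma rect_interior (r : Rect) :
    interior r.toSet = Set.Ioo r.s r.s' ×ˢ Set.Ioo r.t r.t' := by
  rw [Rect.toSet, interior_prod_eq, interior_Icc, interior_Icc]

lemma disj_fst {a b c d : ℝ} (h : b ≤ c) (T U : Set ℝ) :
    (Set.Ioo a b ×ˢ T) ∩ (Set.Ioo c d ×ˢ U) = ∅ := by
  rw [Set.eq_empty_iff_forall_notMem]
  rintro ⟨x, y⟩ ⟨⟨⟨_, hb⟩, _⟩, ⟨⟨hc, _⟩, _⟩⟩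
  linarith

lemma disj_snd {a b c d : ℝ} (h : b ≤ c) (T U : Set ℝ) :
    (T ×ˢ Set.Ioo a b) ∩ (U ×ˢ Set.Ioo c d) = ∅ := by
  rw [Set.eq_empty_iff_forall_notMem]
  rintro ⟨x, y⟩ ⟨⟨_, ⟨_, hb⟩⟩, ⟨_, ⟨hc, _⟩⟩⟩
  linarith

lemma Ioo_succ_le {n : ℕ} {σ : Fin (n+1) → ℝ} (hm : Monotone σ) {i i' : Fin n}
    (h : i < i') : σ i.succ ≤ σ i'.castSucc := by
  apply hm
  rw [Fin.succ_le_castSucc_iff]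
  exact h

/-- one point of a monotone partition of `[0,1]` lies in `[0,1]`. -/
lemma pt_mem {n : ℕ} {σ : Fin (n+1) → ℝ} (hm : Monotone σ)
    (h0 : σ 0 = 0) (h1 : σ (Fin.last n) = 1) (i : Fin (n+1)) : σ i ∈ Set.Icc (0:ℝ) 1 :=
  ⟨h0 ▸ hm (Fin.zero_le _), h1 ▸ hm (Fin.le_last _)⟩

lemma pos_of_partition {n : ℕ} {σ : Fin (n+1) → ℝ}
    (h0 : σ 0 = 0) (h1 : σ (Fin.last n) = 1) : 0 < n := by
  rcases Nat.eq_zero_or_pos n with h | h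
  · subst h
    rw [show (Fin.last 0) = 0 from rfl, h0] at h1
    norm_num at h1
  · exact h

lemma unitRect_toSet : unitRect.toSet = Set.Icc (0:ℝ) 1 ×ˢ Set.Icc (0:ℝ) 1 := rfl

lemma sum_le_cVarPow {p : ℝ} {X : ℝ → ℝ → ℝ} {K : ℕ} (π : Fin K → Rect)
    (h : IsRectPartition unitRect π) :
    ∑ i, (‖boxInc X (π i)‖₊ : ℝ≥0∞) ^ p ≤ cVarPow p X unitRect :=
  le_iSup_of_le K (le_iSup_of_le π (le_iSup_of_le h le_rfl))

lemma grid_le_cVarPow {p : ℝ} {X : ℝ → ℝ → ℝ} {n m : ℕ}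
    {σ : Fin (n+1) → ℝ} {τ : Fin (m+1) → ℝ} (hσ : Monotone σ) (hτ : Monotone τ)
    (hσ0 : σ 0 = 0) (hσ1 : σ (Fin.last n) = 1) (hτ0 : τ 0 = 0) (hτ1 : τ (Fin.last m) = 1) :
    ∑ i : Fin n, ∑ j : Fin m,
        (‖boxInc X ⟨σ i.castSucc, σ i.succ, τ j.castSucc, τ j.succ⟩‖₊ : ℝ≥0∞) ^ p
      ≤ cVarPow p X unitRect := by
  have hn : 0 < n := pos_of_partition hσ0 hσ1
  have hm : 0 < m := pos_of_partition hτ0 hτ1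
  set cell : Fin n × Fin m → Rect :=
    fun q => ⟨σ q.1.castSucc, σ q.1.succ, τ q.2.castSucc, τ q.2.succ⟩ with hcell
  set e : Fin n × Fin m ≃ Fin (n * m) := finProdFinEquiv with he
  set π : Fin (n * m) → Rect := fun k => cell (e.symm k) with hπ
  have hpart : IsRectPartition unitRect π := by
    refine ⟨?_, ?_, ?_⟩
    · intro k
      exact ⟨hσ (Fin.castSucc_le_succ _), hτ (Fin.castSucc_le_succ _)⟩
    · intro k k' hkk'
      have hq : e.symm k ≠ e.symm k' := fun hc => hkk' (e.symm.injective hc)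
      simp only [hπ, rect_interior]
      by_cases hii : (e.symm k).1 = (e.symm k').1
      · have hjj : (e.symm k).2 ≠ (e.symm k').2 := by
          intro hc; exact hq (Prod.ext hii hc)
        rcases lt_or_gt_of_ne hjj with hlt | hgt
        · exact disj_snd (Ioo_succ_le hτ hlt) _ _
        · rw [Set.inter_comm]; exact disj_snd (Ioo_succ_le hτ hgt) _ _
      · rcases lt_or_gt_of_ne hii with hlt | hgt
        · exact disj_fst (Ioo_succ_le hσ hlt) _ _
        · rw [Set.inter_comm]; exact disj_fst (Ioo_succ_le hσ hgt) _ _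
    · have h1 : ⋃ k, (π k).toSet = ⋃ q : Fin n × Fin m, (cell q).toSet := by
        simp only [hπ]
        exact Function.Surjective.iUnion_comp e.symm.surjective (fun q => (cell q).toSet)
      have h2 : (⋃ q : Fin n × Fin m, (cell q).toSet) = ⋃ i, ⋃ j, (cell (i, j)).toSet :=
        Set.iUnion_prod' (fun q => (cell q).toSet)
      rw [h1, h2, unitRect_toSet]
      have : ∀ i : Fin n, (⋃ j : Fin m, (cell (i,j)).toSet)
          = Set.Icc (σ i.castSucc) (σ i.succ) ×ˢ Set.Icc (0:ℝ) 1 := by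
        intro i
        simp only [hcell, Rect.toSet]
        rw [← Set.prod_iUnion, iUnion_Icc_eq hm hτ, hτ0, hτ1]
      rw [Set.iUnion_congr this, ← Set.iUnion_prod_const, iUnion_Icc_eq hn hσ, hσ0, hσ1]
  calc ∑ i : Fin n, ∑ j : Fin m,
        (‖boxInc X ⟨σ i.castSucc, σ i.succ, τ j.castSucc, τ j.succ⟩‖₊ : ℝ≥0∞) ^ p
      = ∑ q : Fin n × Fin m, (‖boxInc X (cell q)‖₊ : ℝ≥0∞) ^ p := by
        rw [Fintype.sum_prod_type]
    _ = ∑ k : Fin (n*m), (‖boxInc X (π k)‖₊ : ℝ≥0∞) ^ p :=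
        (Equiv.sum_comp e.symm (fun q => (‖boxInc X (cell q)‖₊ : ℝ≥0∞) ^ p)).symm
    _ ≤ cVarPow p X unitRect := sum_le_cVarPow π hpart

lemma strips_vert_le_cVarPow {p : ℝ} {X : ℝ → ℝ → ℝ} {n : ℕ}
    {σ : Fin (n+1) → ℝ} (hσ : Monotone σ) (hσ0 : σ 0 = 0) (hσ1 : σ (Fin.last n) = 1)
    (u : Fin n → ℝ) (hu : ∀ i, u i ∈ Set.Icc (0:ℝ) 1) :
    ∑ i : Fin n, (‖boxInc X ⟨σ i.castSucc, σ i.succ, 0, u i⟩‖₊ : ℝ≥0∞) ^ p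
      ≤ cVarPow p X unitRect := by
  have hn : 0 < n := pos_of_partition hσ0 hσ1
  set bot : Fin n → Rect := fun i => ⟨σ i.castSucc, σ i.succ, 0, u i⟩ with hbot
  set top : Fin n → Rect := fun i => ⟨σ i.castSucc, σ i.succ, u i, 1⟩ with htop
  set e : Fin n ⊕ Fin n ≃ Fin (n + n) := finSumFinEquiv with he
  set π : Fin (n + n) → Rect := fun k => Sum.elim bot top (e.symm k) with hπ
  have hpart : IsRectPartition unitRect π := by
    refine ⟨?_, ?_, ?_⟩
    · intro k
      simp only [hπ]
      rcases e.symm k with i | i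
      · exact ⟨hσ (Fin.castSucc_le_succ _), (hu i).1⟩
      · exact ⟨hσ (Fin.castSucc_le_succ _), (hu i).2⟩
    · intro k k' hkk'
      have hq : e.symm k ≠ e.symm k' := fun hc => hkk' (e.symm.injective hc)
      simp only [hπ, rect_interior]
      rcases hik : e.symm k with i | i <;> rcases hik' : e.symm k' with i' | i' <;>
        rw [hik, hik'] at hq
      · have hii : i ≠ i' := fun hc => hq (by rw [hc])
        rcases lt_or_gt_of_ne hii with hlt | hgt
        · exact disj_fst (Ioo_succ_le hσ hlt) _ _
        · rw [Set.inter_comm]; exact disj_fst (Ioo_succ_le hσ hgt) _ _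
      · by_cases hii : i = i'
        · subst hii; exact disj_snd le_rfl _ _
        · rcases lt_or_gt_of_ne hii with hlt | hgt
          · exact disj_fst (Ioo_succ_le hσ hlt) _ _
          · rw [Set.inter_comm]; exact disj_fst (Ioo_succ_le hσ hgt) _ _
      · by_cases hii : i = i'
        · subst hii; rw [Set.inter_comm]; exact disj_snd le_rfl _ _
        · rcases lt_or_gt_of_ne hii with hlt | hgt
          · exact disj_fst (Ioo_succ_le hσ hlt) _ _
          · rw [Set.inter_comm]; exact disj_fst (Ioo_succ_le hσ hgt) _ _
      · have hii : i ≠ i' := fun hc => hq (by rw [hc])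
        rcases lt_or_gt_of_ne hii with hlt | hgt
        · exact disj_fst (Ioo_succ_le hσ hlt) _ _
        · rw [Set.inter_comm]; exact disj_fst (Ioo_succ_le hσ hgt) _ _
    · have h1 : ⋃ k, (π k).toSet = ⋃ q : Fin n ⊕ Fin n, (Sum.elim bot top q).toSet := by
        simp only [hπ]
        exact Function.Surjective.iUnion_comp e.symm.surjective
          (fun q => (Sum.elim bot top q).toSet)
      rw [h1, Set.iUnion_sum, unitRect_toSet]
      have h3 : ∀ i : Fin n, (bot i).toSet ∪ (top i).toSet
          = Set.Icc (σ i.castSucc) (σ i.succ) ×ˢ Set.Icc (0:ℝ) 1 := by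
        intro i
        simp only [hbot, htop, Rect.toSet]
        rw [← Set.prod_union, Set.Icc_union_Icc_eq_Icc (hu i).1 (hu i).2]
      calc (⋃ i, (Sum.elim bot top (Sum.inl i)).toSet)
            ∪ ⋃ i, (Sum.elim bot top (Sum.inr i)).toSet
          = ⋃ i, ((bot i).toSet ∪ (top i).toSet) := by
            rw [Set.iUnion_union_distrib]
            simp only [Sum.elim_inl, Sum.elim_inr]
        _ = ⋃ i, Set.Icc (σ i.castSucc) (σ i.succ) ×ˢ Set.Icc (0:ℝ) 1 :=
            Set.iUnion_congr h3
        _ = Set.Icc (0:ℝ) 1 ×ˢ Set.Icc (0:ℝ) 1 := by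
            rw [← Set.iUnion_prod_const, iUnion_Icc_eq hn hσ, hσ0, hσ1]
  calc ∑ i : Fin n, (‖boxInc X ⟨σ i.castSucc, σ i.succ, 0, u i⟩‖₊ : ℝ≥0∞) ^ p
      ≤ ∑ i : Fin n, (‖boxInc X (bot i)‖₊ : ℝ≥0∞) ^ p
        + ∑ i : Fin n, (‖boxInc X (top i)‖₊ : ℝ≥0∞) ^ p := le_self_add
    _ = ∑ q : Fin n ⊕ Fin n, (‖boxInc X (Sum.elim bot top q)‖₊ : ℝ≥0∞) ^ p := by
        rw [Fintype.sum_sum_type]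
        simp only [Sum.elim_inl, Sum.elim_inr]
    _ = ∑ k : Fin (n + n), (‖boxInc X (π k)‖₊ : ℝ≥0∞) ^ p :=
        (Equiv.sum_comp e.symm (fun q => (‖boxInc X (Sum.elim bot top q)‖₊ : ℝ≥0∞) ^ p)).symm
    _ ≤ cVarPow p X unitRect := sum_le_cVarPow π hpart

lemma strips_horiz_le_cVarPow {p : ℝ} {X : ℝ → ℝ → ℝ} {m : ℕ}
    {τ : Fin (m+1) → ℝ} (hτ : Monotone τ) (hτ0 : τ 0 = 0) (hτ1 : τ (Fin.last m) = 1)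
    (v : Fin m → ℝ) (hv : ∀ j, v j ∈ Set.Icc (0:ℝ) 1) :
    ∑ j : Fin m, (‖boxInc X ⟨0, v j, τ j.castSucc, τ j.succ⟩‖₊ : ℝ≥0∞) ^ p
      ≤ cVarPow p X unitRect := by
  have hm : 0 < m := pos_of_partition hτ0 hτ1
  set bot : Fin m → Rect := fun j => ⟨0, v j, τ j.castSucc, τ j.succ⟩ with hbot
  set top : Fin m → Rect := fun j => ⟨v j, 1, τ j.castSucc, τ j.succ⟩ with htop
  set e : Fin m ⊕ Fin m ≃ Fin (m + m) := finSumFinEquiv with he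
  set π : Fin (m + m) → Rect := fun k => Sum.elim bot top (e.symm k) with hπ
  have hpart : IsRectPartition unitRect π := by
    refine ⟨?_, ?_, ?_⟩
    · intro k
      simp only [hπ]
      rcases e.symm k with j | j
      · exact ⟨(hv j).1, hτ (Fin.castSucc_le_succ _)⟩
      · exact ⟨(hv j).2, hτ (Fin.castSucc_le_succ _)⟩
    · intro k k' hkk'
      have hq : e.symm k ≠ e.symm k' := fun hc => hkk' (e.symm.injective hc)
      simp only [hπ, rect_interior]
      rcases hik : e.symm k with j | j <;> rcases hik' : e.symm k' with j' | j' <;>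
        rw [hik, hik'] at hq
      · have hjj : j ≠ j' := fun hc => hq (by rw [hc])
        rcases lt_or_gt_of_ne hjj with hlt | hgt
        · exact disj_snd (Ioo_succ_le hτ hlt) _ _
        · rw [Set.inter_comm]; exact disj_snd (Ioo_succ_le hτ hgt) _ _
      · by_cases hjj : j = j'
        · subst hjj; exact disj_fst le_rfl _ _
        · rcases lt_or_gt_of_ne hjj with hlt | hgt
          · exact disj_snd (Ioo_succ_le hτ hlt) _ _
          · rw [Set.inter_comm]; exact disj_snd (Ioo_succ_le hτ hgt) _ _
      · by_cases hjj : j = j'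
        · subst hjj; rw [Set.inter_comm]; exact disj_fst le_rfl _ _
        · rcases lt_or_gt_of_ne hjj with hlt | hgt
          · exact disj_snd (Ioo_succ_le hτ hlt) _ _
          · rw [Set.inter_comm]; exact disj_snd (Ioo_succ_le hτ hgt) _ _
      · have hjj : j ≠ j' := fun hc => hq (by rw [hc])
        rcases lt_or_gt_of_ne hjj with hlt | hgt
        · exact disj_snd (Ioo_succ_le hτ hlt) _ _
        · rw [Set.inter_comm]; exact disj_snd (Ioo_succ_le hτ hgt) _ _
    · have h1 : ⋃ k, (π k).toSet = ⋃ q : Fin m ⊕ Fin m, (Sum.elim bot top q).toSet := by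
        simp only [hπ]
        exact Function.Surjective.iUnion_comp e.symm.surjective
          (fun q => (Sum.elim bot top q).toSet)
      rw [h1, Set.iUnion_sum, unitRect_toSet]
      have h3 : ∀ j : Fin m, (bot j).toSet ∪ (top j).toSet
          = Set.Icc (0:ℝ) 1 ×ˢ Set.Icc (τ j.castSucc) (τ j.succ) := by
        intro j
        simp only [hbot, htop, Rect.toSet]
        rw [← Set.union_prod, Set.Icc_union_Icc_eq_Icc (hv j).1 (hv j).2]
      calc (⋃ j, (Sum.elim bot top (Sum.inl j)).toSet)
            ∪ ⋃ j, (Sum.elim bot top (Sum.inr j)).toSet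
          = ⋃ j, ((bot j).toSet ∪ (top j).toSet) := by
            rw [Set.iUnion_union_distrib]
            simp only [Sum.elim_inl, Sum.elim_inr]
        _ = ⋃ j, Set.Icc (0:ℝ) 1 ×ˢ Set.Icc (τ j.castSucc) (τ j.succ) :=
            Set.iUnion_congr h3
        _ = Set.Icc (0:ℝ) 1 ×ˢ Set.Icc (0:ℝ) 1 := by
            rw [← Set.prod_iUnion, iUnion_Icc_eq hm hτ, hτ0, hτ1]
  calc ∑ j : Fin m, (‖boxInc X ⟨0, v j, τ j.castSucc, τ j.succ⟩‖₊ : ℝ≥0∞) ^ p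
      ≤ ∑ j : Fin m, (‖boxInc X (bot j)‖₊ : ℝ≥0∞) ^ p
        + ∑ j : Fin m, (‖boxInc X (top j)‖₊ : ℝ≥0∞) ^ p := le_self_add
    _ = ∑ q : Fin m ⊕ Fin m, (‖boxInc X (Sum.elim bot top q)‖₊ : ℝ≥0∞) ^ p := by
        rw [Fintype.sum_sum_type]
        simp only [Sum.elim_inl, Sum.elim_inr]
    _ = ∑ k : Fin (m + m), (‖boxInc X (π k)‖₊ : ℝ≥0∞) ^ p :=
        (Equiv.sum_comp e.symm (fun q => (‖boxInc X (Sum.elim bot top q)‖₊ : ℝ≥0∞) ^ p)).symm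
    _ ≤ cVarPow p X unitRect := sum_le_cVarPow π hpart

lemma le_supNormSq {X : ℝ → ℝ → ℝ} {s t : ℝ}
    (hs : s ∈ Set.Icc (0:ℝ) 1) (ht : t ∈ Set.Icc (0:ℝ) 1) :
    (‖X s t‖₊ : ℝ≥0∞) ≤ supNormSq X :=
  le_iSup₂_of_le s hs (le_iSup₂_of_le t ht le_rfl)

lemma diff_le_supNormSq {X : ℝ → ℝ → ℝ} {s t s' t' : ℝ}
    (hs : s ∈ Set.Icc (0:ℝ) 1) (ht : t ∈ Set.Icc (0:ℝ) 1)
    (hs' : s' ∈ Set.Icc (0:ℝ) 1) (ht' : t' ∈ Set.Icc (0:ℝ) 1) :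
    (‖X s' t' - X s t‖₊ : ℝ≥0∞) ≤ 2 * supNormSq X := by
  calc (‖X s' t' - X s t‖₊ : ℝ≥0∞) ≤ ‖X s' t'‖₊ + ‖X s t‖₊ := by
        rw [← ENNReal.coe_add]
        exact_mod_cast nnnorm_sub_le _ _
    _ ≤ supNormSq X + supNormSq X := add_le_add (le_supNormSq hs' ht') (le_supNormSq hs ht)
    _ = 2 * supNormSq X := (two_mul _).symm

lemma sum_le_oneVarPow {p : ℝ} {x : ℝ → ℝ} {k : ℕ} {r : Fin (k+1) → ℝ}
    (hm : Monotone r) (h0 : r 0 = 0) (h1 : r (Fin.last k) = 1) :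
    ∑ i : Fin k, (‖x (r i.succ) - x (r i.castSucc)‖₊ : ℝ≥0∞) ^ p ≤ oneVarPow p x 0 1 :=
  le_iSup_of_le k (le_iSup_of_le r (le_iSup_of_le hm (le_iSup_of_le h0 (le_iSup_of_le h1 le_rfl))))

/-- horizontal increments at arbitrary heights. -/
lemma row_inc_le {p : ℝ} (hp : 1 ≤ p) {X : ℝ → ℝ → ℝ} {n : ℕ}
    {σ : Fin (n+1) → ℝ} (hσ : Monotone σ) (hσ0 : σ 0 = 0) (hσ1 : σ (Fin.last n) = 1)
    (t : Fin n → ℝ) (ht : ∀ i, t i ∈ Set.Icc (0:ℝ) 1) :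
    ∑ i : Fin n, (‖X (σ i.succ) (t i) - X (σ i.castSucc) (t i)‖₊ : ℝ≥0∞) ^ p
      ≤ 2 ^ p * (oneVarPow p (fun s => X s 0) 0 1 + cVarPow p X unitRect) := by
  have key : ∀ i : Fin n,
      (‖X (σ i.succ) (t i) - X (σ i.castSucc) (t i)‖₊ : ℝ≥0∞) ^ p
      ≤ 2 ^ p * ((‖X (σ i.succ) 0 - X (σ i.castSucc) 0‖₊ : ℝ≥0∞) ^ p
          + (‖boxInc X ⟨σ i.castSucc, σ i.succ, 0, t i⟩‖₊ : ℝ≥0∞) ^ p) := by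
    intro i
    have hdec : X (σ i.succ) (t i) - X (σ i.castSucc) (t i)
        = (X (σ i.succ) 0 - X (σ i.castSucc) 0) + boxInc X ⟨σ i.castSucc, σ i.succ, 0, t i⟩ := by
      simp only [boxInc]; ring
    have h1 : (‖X (σ i.succ) (t i) - X (σ i.castSucc) (t i)‖₊ : ℝ≥0∞)
        ≤ (‖X (σ i.succ) 0 - X (σ i.castSucc) 0‖₊ : ℝ≥0∞)
          + (‖boxInc X ⟨σ i.castSucc, σ i.succ, 0, t i⟩‖₊ : ℝ≥0∞) := by
      rw [hdec, ← ENNReal.coe_add]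
      exact_mod_cast nnnorm_add_le _ _
    calc (‖X (σ i.succ) (t i) - X (σ i.castSucc) (t i)‖₊ : ℝ≥0∞) ^ p
        ≤ ((‖X (σ i.succ) 0 - X (σ i.castSucc) 0‖₊ : ℝ≥0∞)
          + (‖boxInc X ⟨σ i.castSucc, σ i.succ, 0, t i⟩‖₊ : ℝ≥0∞)) ^ p :=
          ENNReal.rpow_le_rpow h1 (le_trans zero_le_one hp)
      _ ≤ _ := two_rpow_le hp _ _
  calc ∑ i : Fin n, (‖X (σ i.succ) (t i) - X (σ i.castSucc) (t i)‖₊ : ℝ≥0∞) ^ p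
      ≤ ∑ i : Fin n, 2 ^ p * ((‖X (σ i.succ) 0 - X (σ i.castSucc) 0‖₊ : ℝ≥0∞) ^ p
          + (‖boxInc X ⟨σ i.castSucc, σ i.succ, 0, t i⟩‖₊ : ℝ≥0∞) ^ p) :=
        Finset.sum_le_sum fun i _ => key i
    _ = 2 ^ p * (∑ i : Fin n, (‖X (σ i.succ) 0 - X (σ i.castSucc) 0‖₊ : ℝ≥0∞) ^ p
          + ∑ i : Fin n, (‖boxInc X ⟨σ i.castSucc, σ i.succ, 0, t i⟩‖₊ : ℝ≥0∞) ^ p) := by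
        rw [← Finset.mul_sum, Finset.sum_add_distrib]
    _ ≤ 2 ^ p * (oneVarPow p (fun s => X s 0) 0 1 + cVarPow p X unitRect) := by
        gcongr
        · exact sum_le_oneVarPow hσ hσ0 hσ1
        · exact strips_vert_le_cVarPow hσ hσ0 hσ1 t ht

/-- vertical increments at arbitrary abscissae. -/
lemma col_inc_le {p : ℝ} (hp : 1 ≤ p) {X : ℝ → ℝ → ℝ} {m : ℕ}
    {τ : Fin (m+1) → ℝ} (hτ : Monotone τ) (hτ0 : τ 0 = 0) (hτ1 : τ (Fin.last m) = 1)
    (v : Fin m → ℝ) (hv : ∀ j, v j ∈ Set.Icc (0:ℝ) 1) :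
    ∑ j : Fin m, (‖X (v j) (τ j.succ) - X (v j) (τ j.castSucc)‖₊ : ℝ≥0∞) ^ p
      ≤ 2 ^ p * (oneVarPow p (fun t => X 0 t) 0 1 + cVarPow p X unitRect) := by
  have key : ∀ j : Fin m,
      (‖X (v j) (τ j.succ) - X (v j) (τ j.castSucc)‖₊ : ℝ≥0∞) ^ p
      ≤ 2 ^ p * ((‖X 0 (τ j.succ) - X 0 (τ j.castSucc)‖₊ : ℝ≥0∞) ^ p
          + (‖boxInc X ⟨0, v j, τ j.castSucc, τ j.succ⟩‖₊ : ℝ≥0∞) ^ p) := by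
    intro j
    have hdec : X (v j) (τ j.succ) - X (v j) (τ j.castSucc)
        = (X 0 (τ j.succ) - X 0 (τ j.castSucc)) + boxInc X ⟨0, v j, τ j.castSucc, τ j.succ⟩ := by
      simp only [boxInc]; ring
    have h1 : (‖X (v j) (τ j.succ) - X (v j) (τ j.castSucc)‖₊ : ℝ≥0∞)
        ≤ (‖X 0 (τ j.succ) - X 0 (τ j.castSucc)‖₊ : ℝ≥0∞)
          + (‖boxInc X ⟨0, v j, τ j.castSucc, τ j.succ⟩‖₊ : ℝ≥0∞) := by
      rw [hdec, ← ENNReal.coe_add]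
      exact_mod_cast nnnorm_add_le _ _
    calc (‖X (v j) (τ j.succ) - X (v j) (τ j.castSucc)‖₊ : ℝ≥0∞) ^ p
        ≤ ((‖X 0 (τ j.succ) - X 0 (τ j.castSucc)‖₊ : ℝ≥0∞)
          + (‖boxInc X ⟨0, v j, τ j.castSucc, τ j.succ⟩‖₊ : ℝ≥0∞)) ^ p :=
          ENNReal.rpow_le_rpow h1 (le_trans zero_le_one hp)
      _ ≤ _ := two_rpow_le hp _ _
  calc ∑ j : Fin m, (‖X (v j) (τ j.succ) - X (v j) (τ j.castSucc)‖₊ : ℝ≥0∞) ^ p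
      ≤ ∑ j : Fin m, 2 ^ p * ((‖X 0 (τ j.succ) - X 0 (τ j.castSucc)‖₊ : ℝ≥0∞) ^ p
          + (‖boxInc X ⟨0, v j, τ j.castSucc, τ j.succ⟩‖₊ : ℝ≥0∞) ^ p) :=
        Finset.sum_le_sum fun j _ => key j
    _ = 2 ^ p * (∑ j : Fin m, (‖X 0 (τ j.succ) - X 0 (τ j.castSucc)‖₊ : ℝ≥0∞) ^ p
          + ∑ j : Fin m, (‖boxInc X ⟨0, v j, τ j.castSucc, τ j.succ⟩‖₊ : ℝ≥0∞) ^ p) := by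
        rw [← Finset.mul_sum, Finset.sum_add_distrib]
    _ ≤ 2 ^ p * (oneVarPow p (fun t => X 0 t) 0 1 + cVarPow p X unitRect) := by
        gcongr
        · exact sum_le_oneVarPow hτ hτ0 hτ1
        · exact strips_horiz_le_cVarPow hτ hτ0 hτ1 v hv

lemma tri_ennreal (a b : ℝ) : (‖a + b‖₊ : ℝ≥0∞) ≤ ‖a‖₊ + ‖b‖₊ := by
  rw [← ENNReal.coe_add]; exact_mod_cast nnnorm_add_le a b

lemma tri_sub_ennreal (a b : ℝ) : (‖a - b‖₊ : ℝ≥0∞) ≤ ‖a‖₊ + ‖b‖₊ := by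
  rw [← ENNReal.coe_add]; exact_mod_cast nnnorm_sub_le a b

lemma mul_nnnorm_ennreal (a b : ℝ) : (‖a * b‖₊ : ℝ≥0∞) = ‖a‖₊ * ‖b‖₊ := by
  rw [← ENNReal.coe_mul, nnnorm_mul]

lemma box_le_supNormSq {Y : ℝ → ℝ → ℝ} {s s' t t' : ℝ}
    (hs : s ∈ Set.Icc (0:ℝ) 1) (hs' : s' ∈ Set.Icc (0:ℝ) 1)
    (ht : t ∈ Set.Icc (0:ℝ) 1) (ht' : t' ∈ Set.Icc (0:ℝ) 1) :
    (‖boxInc Y ⟨s, s', t, t'⟩‖₊ : ℝ≥0∞) ≤ 4 * supNormSq Y := by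
  have h1 : (‖boxInc Y ⟨s, s', t, t'⟩‖₊ : ℝ≥0∞)
      ≤ ‖Y s t - Y s' t - Y s t'‖₊ + ‖Y s' t'‖₊ := tri_ennreal _ _
  calc (‖boxInc Y ⟨s, s', t, t'⟩‖₊ : ℝ≥0∞)
      ≤ ‖Y s t - Y s' t - Y s t'‖₊ + ‖Y s' t'‖₊ := h1
    _ ≤ ((‖Y s t - Y s' t‖₊ : ℝ≥0∞) + ‖Y s t'‖₊) + ‖Y s' t'‖₊ :=
        add_le_add_left (tri_sub_ennreal _ _) _
    _ ≤ (((‖Y s t‖₊ : ℝ≥0∞) + ‖Y s' t‖₊) + ‖Y s t'‖₊) + ‖Y s' t'‖₊ :=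
        add_le_add_left (add_le_add_left (tri_sub_ennreal _ _) _) _
    _ ≤ ((supNormSq Y + supNormSq Y) + supNormSq Y) + supNormSq Y := by
        gcongr
        · exact le_supNormSq hs ht
        · exact le_supNormSq hs' ht
        · exact le_supNormSq hs ht'
        · exact le_supNormSq hs' ht'
    _ = 4 * supNormSq Y := by ring

lemma box_prod_nnorm (X Y : ℝ → ℝ → ℝ) (s s' t t' : ℝ) :
    (‖boxInc (fun a b => X a b * Y a b) ⟨s, s', t, t'⟩‖₊ : ℝ≥0∞) ≤
      (‖X s t‖₊ : ℝ≥0∞) * ‖boxInc Y ⟨s, s', t, t'⟩‖₊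
      + (‖boxInc X ⟨s, s', t, t'⟩‖₊ : ℝ≥0∞) * ‖Y s t‖₊
      + (‖X s' t - X s t‖₊ : ℝ≥0∞) * ‖Y s t' - Y s t‖₊
      + (‖X s t' - X s t‖₊ : ℝ≥0∞) * ‖Y s' t - Y s t‖₊
      + (‖X s' t - X s t‖₊ : ℝ≥0∞) * ‖boxInc Y ⟨s, s', t, t'⟩‖₊
      + (‖X s t' - X s t‖₊ : ℝ≥0∞) * ‖boxInc Y ⟨s, s', t, t'⟩‖₊
      + (‖boxInc X ⟨s, s', t, t'⟩‖₊ : ℝ≥0∞) * ‖Y s' t - Y s t‖₊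
      + (‖boxInc X ⟨s, s', t, t'⟩‖₊ : ℝ≥0∞) * ‖Y s t' - Y s t‖₊
      + (‖boxInc X ⟨s, s', t, t'⟩‖₊ : ℝ≥0∞) * ‖boxInc Y ⟨s, s', t, t'⟩‖₊ := by
  have hdec : boxInc (fun a b => X a b * Y a b) ⟨s, s', t, t'⟩ =
      X s t * boxInc Y ⟨s, s', t, t'⟩
      + boxInc X ⟨s, s', t, t'⟩ * Y s t
      + (X s' t - X s t) * (Y s t' - Y s t)
      + (X s t' - X s t) * (Y s' t - Y s t)
      + (X s' t - X s t) * boxInc Y ⟨s, s', t, t'⟩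
      + (X s t' - X s t) * boxInc Y ⟨s, s', t, t'⟩
      + boxInc X ⟨s, s', t, t'⟩ * (Y s' t - Y s t)
      + boxInc X ⟨s, s', t, t'⟩ * (Y s t' - Y s t)
      + boxInc X ⟨s, s', t, t'⟩ * boxInc Y ⟨s, s', t, t'⟩ := by
    simp only [boxInc]; ring
  rw [hdec]
  refine le_trans (tri_ennreal _ _) (add_le_add
    (le_trans (tri_ennreal _ _) (add_le_add
      (le_trans (tri_ennreal _ _) (add_le_add
        (le_trans (tri_ennreal _ _) (add_le_add
          (le_trans (tri_ennreal _ _) (add_le_add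
            (le_trans (tri_ennreal _ _) (add_le_add
              (le_trans (tri_ennreal _ _) (add_le_add
                (le_trans (tri_ennreal _ _) (add_le_add
                  (mul_nnnorm_ennreal _ _).le
                  (mul_nnnorm_ennreal _ _).le))
                (mul_nnnorm_ennreal _ _).le))
              (mul_nnnorm_ennreal _ _).le))
            (mul_nnnorm_ennreal _ _).le))
          (mul_nnnorm_ennreal _ _).le))
        (mul_nnnorm_ennreal _ _).le))
      (mul_nnnorm_ennreal _ _).le))
    (mul_nnnorm_ennreal _ _).le)

lemma supNormSq_le_cvarNorm {p : ℝ} (X : ℝ → ℝ → ℝ) : supNormSq X ≤ cvarNorm p X :=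
  le_self_add.trans (le_self_add.trans le_self_add)

lemma oneVarPow_base_le_cvarNorm {p : ℝ} (hp0 : 0 < p) (X : ℝ → ℝ → ℝ) :
    oneVarPow p (fun s => X s 0) 0 1 ≤ (cvarNorm p X) ^ p :=
  root_le_imp hp0 ((le_add_self.trans le_self_add).trans le_self_add :
    oneVar p (fun s => X s 0) 0 1 ≤ cvarNorm p X)

lemma oneVarPow_side_le_cvarNorm {p : ℝ} (hp0 : 0 < p) (X : ℝ → ℝ → ℝ) :
    oneVarPow p (fun t => X 0 t) 0 1 ≤ (cvarNorm p X) ^ p :=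
  root_le_imp hp0 ((le_add_self).trans le_self_add :
    oneVar p (fun t => X 0 t) 0 1 ≤ cvarNorm p X)

lemma cVarPow_le_cvarNorm {p : ℝ} (hp0 : 0 < p) (X : ℝ → ℝ → ℝ) :
    cVarPow p X unitRect ≤ (cvarNorm p X) ^ p :=
  root_le_imp hp0 (le_add_self : cVar p X unitRect ≤ cvarNorm p X)

/-- mixed term: horizontal X increments times vertical Y increments. -/
lemma T3_le {p : ℝ} (hp : 1 ≤ p) (X Y : ℝ → ℝ → ℝ) {n m : ℕ}
    {σ : Fin (n+1) → ℝ} {τ : Fin (m+1) → ℝ} (hσ : Monotone σ) (hτ : Monotone τ)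
    (hσ0 : σ 0 = 0) (hσ1 : σ (Fin.last n) = 1) (hτ0 : τ 0 = 0) (hτ1 : τ (Fin.last m) = 1) :
    ∑ i : Fin n, ∑ j : Fin m,
      (‖X (σ i.succ) (τ j.castSucc) - X (σ i.castSucc) (τ j.castSucc)‖₊ : ℝ≥0∞) ^ p *
      (‖Y (σ i.castSucc) (τ j.succ) - Y (σ i.castSucc) (τ j.castSucc)‖₊ : ℝ≥0∞) ^ p
    ≤ (2 ^ p * (oneVarPow p (fun s => X s 0) 0 1 + cVarPow p X unitRect)) *
      (2 ^ p * (oneVarPow p (fun t => Y 0 t) 0 1 + cVarPow p Y unitRect)) := by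
  have hp0 : 0 < p := lt_of_lt_of_le one_pos hp
  have hm : 0 < m := pos_of_partition hτ0 hτ1
  have hσmem : ∀ i, σ i ∈ Set.Icc (0:ℝ) 1 := pt_mem hσ hσ0 hσ1
  have hτmem : ∀ j, τ j ∈ Set.Icc (0:ℝ) 1 := pt_mem hτ hτ0 hτ1
  haveI : Nonempty (Fin m) := ⟨⟨0, hm⟩⟩
  have hchoice : ∀ i : Fin n, ∃ j0 : Fin m, ∀ j : Fin m,
      (‖X (σ i.succ) (τ j.castSucc) - X (σ i.castSucc) (τ j.castSucc)‖₊ : ℝ≥0∞)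
      ≤ (‖X (σ i.succ) (τ j0.castSucc) - X (σ i.castSucc) (τ j0.castSucc)‖₊ : ℝ≥0∞) :=
    fun i => Finite.exists_max _
  choose js hjs using hchoice
  calc ∑ i : Fin n, ∑ j : Fin m,
      (‖X (σ i.succ) (τ j.castSucc) - X (σ i.castSucc) (τ j.castSucc)‖₊ : ℝ≥0∞) ^ p *
      (‖Y (σ i.castSucc) (τ j.succ) - Y (σ i.castSucc) (τ j.castSucc)‖₊ : ℝ≥0∞) ^ p
      ≤ ∑ i : Fin n, ∑ j : Fin m,
        (‖X (σ i.succ) (τ (js i).castSucc) - X (σ i.castSucc) (τ (js i).castSucc)‖₊ : ℝ≥0∞) ^ p *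
        (‖Y (σ i.castSucc) (τ j.succ) - Y (σ i.castSucc) (τ j.castSucc)‖₊ : ℝ≥0∞) ^ p := by
        refine Finset.sum_le_sum fun i _ => Finset.sum_le_sum fun j _ => ?_
        exact mul_le_mul_left (ENNReal.rpow_le_rpow (hjs i j) hp0.le) _
    _ = ∑ i : Fin n,
        (‖X (σ i.succ) (τ (js i).castSucc) - X (σ i.castSucc) (τ (js i).castSucc)‖₊ : ℝ≥0∞) ^ p *
        ∑ j : Fin m,
          (‖Y (σ i.castSucc) (τ j.succ) - Y (σ i.castSucc) (τ j.castSucc)‖₊ : ℝ≥0∞) ^ p := by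
        simp only [← Finset.mul_sum]
    _ ≤ ∑ i : Fin n,
        (‖X (σ i.succ) (τ (js i).castSucc) - X (σ i.castSucc) (τ (js i).castSucc)‖₊ : ℝ≥0∞) ^ p *
        (2 ^ p * (oneVarPow p (fun t => Y 0 t) 0 1 + cVarPow p Y unitRect)) := by
        refine Finset.sum_le_sum fun i _ => mul_le_mul_right ?_ _
        exact col_inc_le hp hτ hτ0 hτ1 (fun _ => σ i.castSucc) (fun _ => hσmem _)
    _ = (∑ i : Fin n,
        (‖X (σ i.succ) (τ (js i).castSucc) - X (σ i.castSucc) (τ (js i).castSucc)‖₊ : ℝ≥0∞) ^ p) *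
        (2 ^ p * (oneVarPow p (fun t => Y 0 t) 0 1 + cVarPow p Y unitRect)) :=
        (Finset.sum_mul _ _ _).symm
    _ ≤ (2 ^ p * (oneVarPow p (fun s => X s 0) 0 1 + cVarPow p X unitRect)) *
        (2 ^ p * (oneVarPow p (fun t => Y 0 t) 0 1 + cVarPow p Y unitRect)) := by
        refine mul_le_mul_left ?_ _
        exact row_inc_le hp hσ hσ0 hσ1 (fun i => τ (js i).castSucc) (fun i => hτmem _)

/-- mixed term: vertical X increments times horizontal Y increments. -/
lemma T4_le {p : ℝ} (hp : 1 ≤ p) (X Y : ℝ → ℝ → ℝ) {n m : ℕ}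
    {σ : Fin (n+1) → ℝ} {τ : Fin (m+1) → ℝ} (hσ : Monotone σ) (hτ : Monotone τ)
    (hσ0 : σ 0 = 0) (hσ1 : σ (Fin.last n) = 1) (hτ0 : τ 0 = 0) (hτ1 : τ (Fin.last m) = 1) :
    ∑ i : Fin n, ∑ j : Fin m,
      (‖X (σ i.castSucc) (τ j.succ) - X (σ i.castSucc) (τ j.castSucc)‖₊ : ℝ≥0∞) ^ p *
      (‖Y (σ i.succ) (τ j.castSucc) - Y (σ i.castSucc) (τ j.castSucc)‖₊ : ℝ≥0∞) ^ p
    ≤ (2 ^ p * (oneVarPow p (fun t => X 0 t) 0 1 + cVarPow p X unitRect)) *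
      (2 ^ p * (oneVarPow p (fun s => Y s 0) 0 1 + cVarPow p Y unitRect)) := by
  have hp0 : 0 < p := lt_of_lt_of_le one_pos hp
  have hn : 0 < n := pos_of_partition hσ0 hσ1
  have hσmem : ∀ i, σ i ∈ Set.Icc (0:ℝ) 1 := pt_mem hσ hσ0 hσ1
  have hτmem : ∀ j, τ j ∈ Set.Icc (0:ℝ) 1 := pt_mem hτ hτ0 hτ1
  haveI : Nonempty (Fin n) := ⟨⟨0, hn⟩⟩
  have hchoice : ∀ j : Fin m, ∃ i0 : Fin n, ∀ i : Fin n,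
      (‖X (σ i.castSucc) (τ j.succ) - X (σ i.castSucc) (τ j.castSucc)‖₊ : ℝ≥0∞)
      ≤ (‖X (σ i0.castSucc) (τ j.succ) - X (σ i0.castSucc) (τ j.castSucc)‖₊ : ℝ≥0∞) :=
    fun j => Finite.exists_max _
  choose is his using hchoice
  rw [Finset.sum_comm]
  calc ∑ j : Fin m, ∑ i : Fin n,
      (‖X (σ i.castSucc) (τ j.succ) - X (σ i.castSucc) (τ j.castSucc)‖₊ : ℝ≥0∞) ^ p *
      (‖Y (σ i.succ) (τ j.castSucc) - Y (σ i.castSucc) (τ j.castSucc)‖₊ : ℝ≥0∞) ^ p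
      ≤ ∑ j : Fin m, ∑ i : Fin n,
        (‖X (σ (is j).castSucc) (τ j.succ) - X (σ (is j).castSucc) (τ j.castSucc)‖₊ : ℝ≥0∞) ^ p *
        (‖Y (σ i.succ) (τ j.castSucc) - Y (σ i.castSucc) (τ j.castSucc)‖₊ : ℝ≥0∞) ^ p := by
        refine Finset.sum_le_sum fun j _ => Finset.sum_le_sum fun i _ => ?_
        exact mul_le_mul_left (ENNReal.rpow_le_rpow (his j i) hp0.le) _
    _ = ∑ j : Fin m,
        (‖X (σ (is j).castSucc) (τ j.succ) - X (σ (is j).castSucc) (τ j.castSucc)‖₊ : ℝ≥0∞) ^ p *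
        ∑ i : Fin n,
          (‖Y (σ i.succ) (τ j.castSucc) - Y (σ i.castSucc) (τ j.castSucc)‖₊ : ℝ≥0∞) ^ p := by
        simp only [← Finset.mul_sum]
    _ ≤ ∑ j : Fin m,
        (‖X (σ (is j).castSucc) (τ j.succ) - X (σ (is j).castSucc) (τ j.castSucc)‖₊ : ℝ≥0∞) ^ p *
        (2 ^ p * (oneVarPow p (fun s => Y s 0) 0 1 + cVarPow p Y unitRect)) := by
        refine Finset.sum_le_sum fun j _ => mul_le_mul_right ?_ _
        exact row_inc_le hp hσ hσ0 hσ1 (fun _ => τ j.castSucc) (fun _ => hτmem _)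
    _ = (∑ j : Fin m,
        (‖X (σ (is j).castSucc) (τ j.succ) - X (σ (is j).castSucc) (τ j.castSucc)‖₊ : ℝ≥0∞) ^ p) *
        (2 ^ p * (oneVarPow p (fun s => Y s 0) 0 1 + cVarPow p Y unitRect)) :=
        (Finset.sum_mul _ _ _).symm
    _ ≤ (2 ^ p * (oneVarPow p (fun t => X 0 t) 0 1 + cVarPow p X unitRect)) *
        (2 ^ p * (oneVarPow p (fun s => Y s 0) 0 1 + cVarPow p Y unitRect)) := by
        refine mul_le_mul_left ?_ _
        exact col_inc_le hp hτ hτ0 hτ1 (fun j => σ (is j).castSucc) (fun j => hσmem _)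

/-- generic bound: bounded factor times box increments of `Y`. -/
lemma Tleft_le {p : ℝ} (hp0 : 0 ≤ p) (Y : ℝ → ℝ → ℝ) {n m : ℕ}
    {σ : Fin (n+1) → ℝ} {τ : Fin (m+1) → ℝ} (hσ : Monotone σ) (hτ : Monotone τ)
    (hσ0 : σ 0 = 0) (hσ1 : σ (Fin.last n) = 1) (hτ0 : τ 0 = 0) (hτ1 : τ (Fin.last m) = 1)
    (u : Fin n → Fin m → ℝ≥0∞) (K : ℝ≥0∞) (hu : ∀ i j, u i j ≤ K) :
    ∑ i : Fin n, ∑ j : Fin m, (u i j) ^ p *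
        (‖boxInc Y ⟨σ i.castSucc, σ i.succ, τ j.castSucc, τ j.succ⟩‖₊ : ℝ≥0∞) ^ p
      ≤ K ^ p * cVarPow p Y unitRect := by
  calc ∑ i : Fin n, ∑ j : Fin m, (u i j) ^ p *
        (‖boxInc Y ⟨σ i.castSucc, σ i.succ, τ j.castSucc, τ j.succ⟩‖₊ : ℝ≥0∞) ^ p
      ≤ ∑ i : Fin n, ∑ j : Fin m, K ^ p *
        (‖boxInc Y ⟨σ i.castSucc, σ i.succ, τ j.castSucc, τ j.succ⟩‖₊ : ℝ≥0∞) ^ p := by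
        refine Finset.sum_le_sum fun i _ => Finset.sum_le_sum fun j _ => ?_
        exact mul_le_mul_left (ENNReal.rpow_le_rpow (hu i j) hp0) _
    _ = K ^ p * ∑ i : Fin n, ∑ j : Fin m,
        (‖boxInc Y ⟨σ i.castSucc, σ i.succ, τ j.castSucc, τ j.succ⟩‖₊ : ℝ≥0∞) ^ p := by
        simp only [← Finset.mul_sum]
    _ ≤ K ^ p * cVarPow p Y unitRect :=
        mul_le_mul_right (grid_le_cVarPow hσ hτ hσ0 hσ1 hτ0 hτ1) _

/-- generic bound: box increments of `X` times a bounded factor. -/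
lemma Tright_le {p : ℝ} (hp0 : 0 ≤ p) (X : ℝ → ℝ → ℝ) {n m : ℕ}
    {σ : Fin (n+1) → ℝ} {τ : Fin (m+1) → ℝ} (hσ : Monotone σ) (hτ : Monotone τ)
    (hσ0 : σ 0 = 0) (hσ1 : σ (Fin.last n) = 1) (hτ0 : τ 0 = 0) (hτ1 : τ (Fin.last m) = 1)
    (w : Fin n → Fin m → ℝ≥0∞) (K : ℝ≥0∞) (hw : ∀ i j, w i j ≤ K) :
    ∑ i : Fin n, ∑ j : Fin m,
        (‖boxInc X ⟨σ i.castSucc, σ i.succ, τ j.castSucc, τ j.succ⟩‖₊ : ℝ≥0∞) ^ p * (w i j) ^ p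
      ≤ cVarPow p X unitRect * K ^ p := by
  calc ∑ i : Fin n, ∑ j : Fin m,
        (‖boxInc X ⟨σ i.castSucc, σ i.succ, τ j.castSucc, τ j.succ⟩‖₊ : ℝ≥0∞) ^ p * (w i j) ^ p
      ≤ ∑ i : Fin n, ∑ j : Fin m,
        (‖boxInc X ⟨σ i.castSucc, σ i.succ, τ j.castSucc, τ j.succ⟩‖₊ : ℝ≥0∞) ^ p * K ^ p := by
        refine Finset.sum_le_sum fun i _ => Finset.sum_le_sum fun j _ => ?_
        exact mul_le_mul_right (ENNReal.rpow_le_rpow (hw i j) hp0) _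
    _ = (∑ i : Fin n, ∑ j : Fin m,
        (‖boxInc X ⟨σ i.castSucc, σ i.succ, τ j.castSucc, τ j.succ⟩‖₊ : ℝ≥0∞) ^ p) * K ^ p := by
        simp only [← Finset.sum_mul]
    _ ≤ cVarPow p X unitRect * K ^ p :=
        mul_le_mul_left (grid_le_cVarPow hσ hτ hσ0 hσ1 hτ0 hτ1) _

lemma gridVarPow_prod_le {p : ℝ} (hp : 1 ≤ p) (X Y : ℝ → ℝ → ℝ) :
    gridVarPow p (fun s t => X s t * Y s t) unitRect ≤
      9 ^ p * (15 * (4 ^ p * ((cvarNorm p X) ^ p * (cvarNorm p Y) ^ p))) := by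
  have hp0 : 0 < p := lt_of_lt_of_le one_pos hp
  set A := cvarNorm p X with hA
  set B := cvarNorm p Y with hB
  have hSX : supNormSq X ≤ A := supNormSq_le_cvarNorm X
  have hSY : supNormSq Y ≤ B := supNormSq_le_cvarNorm Y
  have hHX : oneVarPow p (fun s => X s 0) 0 1 ≤ A ^ p := oneVarPow_base_le_cvarNorm hp0 X
  have hH'X : oneVarPow p (fun t => X 0 t) 0 1 ≤ A ^ p := oneVarPow_side_le_cvarNorm hp0 X
  have hVX : cVarPow p X unitRect ≤ A ^ p := cVarPow_le_cvarNorm hp0 X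
  have hHY : oneVarPow p (fun s => Y s 0) 0 1 ≤ B ^ p := oneVarPow_base_le_cvarNorm hp0 Y
  have hH'Y : oneVarPow p (fun t => Y 0 t) 0 1 ≤ B ^ p := oneVarPow_side_le_cvarNorm hp0 Y
  have hVY : cVarPow p Y unitRect ≤ B ^ p := cVarPow_le_cvarNorm hp0 Y
  have h4pow : (2:ℝ≥0∞) ^ p * 2 ^ p = 4 ^ p := by
    rw [← ENNReal.mul_rpow_of_nonneg _ _ hp0.le]; norm_num
  have h1le4 : (1:ℝ≥0∞) ≤ 4 ^ p := by
    calc (1:ℝ≥0∞) = 1 ^ p := (ENNReal.one_rpow p).symm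
    _ ≤ 4 ^ p := ENNReal.rpow_le_rpow (by norm_num) hp0.le
  have h2le4 : (2:ℝ≥0∞) ^ p ≤ 4 ^ p := ENNReal.rpow_le_rpow (by norm_num) hp0.le
  have hQmul : ∀ z : ℝ≥0∞, z ≤ 4 ^ p * z := fun z => by
    calc z = 1 * z := (one_mul z).symm
    _ ≤ 4 ^ p * z := mul_le_mul_left h1le4 z
  rw [gridVarPow]
  refine iSup_le fun n => iSup_le fun m => iSup_le fun σ => iSup_le fun τ => iSup_le fun hσ =>
    iSup_le fun hτ => iSup_le fun hσ0 => iSup_le fun hσ1 => iSup_le fun hτ0 =>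
    iSup_le fun hτ1 => ?_
  have hσ0' : σ 0 = 0 := hσ0
  have hσ1' : σ (Fin.last n) = 1 := hσ1
  have hτ0' : τ 0 = 0 := hτ0
  have hτ1' : τ (Fin.last m) = 1 := hτ1
  have hσmem : ∀ i, σ i ∈ Set.Icc (0:ℝ) 1 := pt_mem hσ hσ0' hσ1'
  have hτmem : ∀ j, τ j ∈ Set.Icc (0:ℝ) 1 := pt_mem hτ hτ0' hτ1'
  have hpt : ∀ (i : Fin n) (j : Fin m),
      (‖boxInc (fun s t => X s t * Y s t)
          ⟨σ i.castSucc, σ i.succ, τ j.castSucc, τ j.succ⟩‖₊ : ℝ≥0∞) ^ p ≤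
      9 ^ p * (
        (‖X (σ i.castSucc) (τ j.castSucc)‖₊ : ℝ≥0∞) ^ p *
          (‖boxInc Y ⟨σ i.castSucc, σ i.succ, τ j.castSucc, τ j.succ⟩‖₊ : ℝ≥0∞) ^ p
        + (‖boxInc X ⟨σ i.castSucc, σ i.succ, τ j.castSucc, τ j.succ⟩‖₊ : ℝ≥0∞) ^ p *
          (‖Y (σ i.castSucc) (τ j.castSucc)‖₊ : ℝ≥0∞) ^ p
        + (‖X (σ i.succ) (τ j.castSucc) - X (σ i.castSucc) (τ j.castSucc)‖₊ : ℝ≥0∞) ^ p *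
          (‖Y (σ i.castSucc) (τ j.succ) - Y (σ i.castSucc) (τ j.castSucc)‖₊ : ℝ≥0∞) ^ p
        + (‖X (σ i.castSucc) (τ j.succ) - X (σ i.castSucc) (τ j.castSucc)‖₊ : ℝ≥0∞) ^ p *
          (‖Y (σ i.succ) (τ j.castSucc) - Y (σ i.castSucc) (τ j.castSucc)‖₊ : ℝ≥0∞) ^ p
        + (‖X (σ i.succ) (τ j.castSucc) - X (σ i.castSucc) (τ j.castSucc)‖₊ : ℝ≥0∞) ^ p *
          (‖boxInc Y ⟨σ i.castSucc, σ i.succ, τ j.castSucc, τ j.succ⟩‖₊ : ℝ≥0∞) ^ p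
        + (‖X (σ i.castSucc) (τ j.succ) - X (σ i.castSucc) (τ j.castSucc)‖₊ : ℝ≥0∞) ^ p *
          (‖boxInc Y ⟨σ i.castSucc, σ i.succ, τ j.castSucc, τ j.succ⟩‖₊ : ℝ≥0∞) ^ p
        + (‖boxInc X ⟨σ i.castSucc, σ i.succ, τ j.castSucc, τ j.succ⟩‖₊ : ℝ≥0∞) ^ p *
          (‖Y (σ i.succ) (τ j.castSucc) - Y (σ i.castSucc) (τ j.castSucc)‖₊ : ℝ≥0∞) ^ p
        + (‖boxInc X ⟨σ i.castSucc, σ i.succ, τ j.castSucc, τ j.succ⟩‖₊ : ℝ≥0∞) ^ p *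
          (‖Y (σ i.castSucc) (τ j.succ) - Y (σ i.castSucc) (τ j.castSucc)‖₊ : ℝ≥0∞) ^ p
        + (‖boxInc X ⟨σ i.castSucc, σ i.succ, τ j.castSucc, τ j.succ⟩‖₊ : ℝ≥0∞) ^ p *
          (‖boxInc Y ⟨σ i.castSucc, σ i.succ, τ j.castSucc, τ j.succ⟩‖₊ : ℝ≥0∞) ^ p) := by
    intro i j
    refine le_trans (le_trans
      (ENNReal.rpow_le_rpow
        (box_prod_nnorm X Y (σ i.castSucc) (σ i.succ) (τ j.castSucc) (τ j.succ)) hp0.le)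
      (nine_rpow_le hp _ _ _ _ _ _ _ _ _))
      (le_of_eq ?_)
    simp only [ENNReal.mul_rpow_of_nonneg _ _ hp0.le]
  
  -- the nine double sums
  have hU1 : ∑ i : Fin n, ∑ j : Fin m,
      (‖X (σ i.castSucc) (τ j.castSucc)‖₊ : ℝ≥0∞) ^ p *
        (‖boxInc Y ⟨σ i.castSucc, σ i.succ, τ j.castSucc, τ j.succ⟩‖₊ : ℝ≥0∞) ^ p
      ≤ 4 ^ p * (A ^ p * B ^ p) := by
    calc _ ≤ A ^ p * cVarPow p Y unitRect :=
          Tleft_le hp0.le Y hσ hτ hσ0' hσ1' hτ0' hτ1' _ A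
            (fun i j => (le_supNormSq (hσmem _) (hτmem _)).trans hSX)
      _ ≤ A ^ p * B ^ p := mul_le_mul_right hVY _
      _ ≤ 4 ^ p * (A ^ p * B ^ p) := hQmul _
  have hU2 : ∑ i : Fin n, ∑ j : Fin m,
      (‖boxInc X ⟨σ i.castSucc, σ i.succ, τ j.castSucc, τ j.succ⟩‖₊ : ℝ≥0∞) ^ p *
        (‖Y (σ i.castSucc) (τ j.castSucc)‖₊ : ℝ≥0∞) ^ p
      ≤ 4 ^ p * (A ^ p * B ^ p) := by
    calc _ ≤ cVarPow p X unitRect * B ^ p :=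
          Tright_le hp0.le X hσ hτ hσ0' hσ1' hτ0' hτ1' _ B
            (fun i j => (le_supNormSq (hσmem _) (hτmem _)).trans hSY)
      _ ≤ A ^ p * B ^ p := mul_le_mul_left hVX _
      _ ≤ 4 ^ p * (A ^ p * B ^ p) := hQmul _
  have hU3 : ∑ i : Fin n, ∑ j : Fin m,
      (‖X (σ i.succ) (τ j.castSucc) - X (σ i.castSucc) (τ j.castSucc)‖₊ : ℝ≥0∞) ^ p *
        (‖Y (σ i.castSucc) (τ j.succ) - Y (σ i.castSucc) (τ j.castSucc)‖₊ : ℝ≥0∞) ^ p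
      ≤ 4 * (4 ^ p * (A ^ p * B ^ p)) := by
    calc _ ≤ (2 ^ p * (oneVarPow p (fun s => X s 0) 0 1 + cVarPow p X unitRect)) *
          (2 ^ p * (oneVarPow p (fun t => Y 0 t) 0 1 + cVarPow p Y unitRect)) :=
          T3_le hp X Y hσ hτ hσ0' hσ1' hτ0' hτ1'
      _ ≤ (2 ^ p * (A ^ p + A ^ p)) * (2 ^ p * (B ^ p + B ^ p)) := by
          gcongr
      _ = 4 * (4 ^ p * (A ^ p * B ^ p)) := by rw [← h4pow]; ring
  have hU4 : ∑ i : Fin n, ∑ j : Fin m,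
      (‖X (σ i.castSucc) (τ j.succ) - X (σ i.castSucc) (τ j.castSucc)‖₊ : ℝ≥0∞) ^ p *
        (‖Y (σ i.succ) (τ j.castSucc) - Y (σ i.castSucc) (τ j.castSucc)‖₊ : ℝ≥0∞) ^ p
      ≤ 4 * (4 ^ p * (A ^ p * B ^ p)) := by
    calc _ ≤ (2 ^ p * (oneVarPow p (fun t => X 0 t) 0 1 + cVarPow p X unitRect)) *
          (2 ^ p * (oneVarPow p (fun s => Y s 0) 0 1 + cVarPow p Y unitRect)) :=
          T4_le hp X Y hσ hτ hσ0' hσ1' hτ0' hτ1'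
      _ ≤ (2 ^ p * (A ^ p + A ^ p)) * (2 ^ p * (B ^ p + B ^ p)) := by
          gcongr
      _ = 4 * (4 ^ p * (A ^ p * B ^ p)) := by rw [← h4pow]; ring
  have hU5 : ∑ i : Fin n, ∑ j : Fin m,
      (‖X (σ i.succ) (τ j.castSucc) - X (σ i.castSucc) (τ j.castSucc)‖₊ : ℝ≥0∞) ^ p *
        (‖boxInc Y ⟨σ i.castSucc, σ i.succ, τ j.castSucc, τ j.succ⟩‖₊ : ℝ≥0∞) ^ p
      ≤ 4 ^ p * (A ^ p * B ^ p) := by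
    calc _ ≤ (2 * A) ^ p * cVarPow p Y unitRect :=
          Tleft_le hp0.le Y hσ hτ hσ0' hσ1' hτ0' hτ1' _ (2 * A)
            (fun i j => (diff_le_supNormSq (hσmem _) (hτmem _) (hσmem _) (hτmem _)).trans
              (mul_le_mul_right hSX 2))
      _ ≤ (2 * A) ^ p * B ^ p := mul_le_mul_right hVY _
      _ = 2 ^ p * (A ^ p * B ^ p) := by
          rw [ENNReal.mul_rpow_of_nonneg _ _ hp0.le, mul_assoc]
      _ ≤ 4 ^ p * (A ^ p * B ^ p) := mul_le_mul_left h2le4 _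
  have hU6 : ∑ i : Fin n, ∑ j : Fin m,
      (‖X (σ i.castSucc) (τ j.succ) - X (σ i.castSucc) (τ j.castSucc)‖₊ : ℝ≥0∞) ^ p *
        (‖boxInc Y ⟨σ i.castSucc, σ i.succ, τ j.castSucc, τ j.succ⟩‖₊ : ℝ≥0∞) ^ p
      ≤ 4 ^ p * (A ^ p * B ^ p) := by
    calc _ ≤ (2 * A) ^ p * cVarPow p Y unitRect :=
          Tleft_le hp0.le Y hσ hτ hσ0' hσ1' hτ0' hτ1' _ (2 * A)
            (fun i j => (diff_le_supNormSq (hσmem _) (hτmem _) (hσmem _) (hτmem _)).trans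
              (mul_le_mul_right hSX 2))
      _ ≤ (2 * A) ^ p * B ^ p := mul_le_mul_right hVY _
      _ = 2 ^ p * (A ^ p * B ^ p) := by
          rw [ENNReal.mul_rpow_of_nonneg _ _ hp0.le, mul_assoc]
      _ ≤ 4 ^ p * (A ^ p * B ^ p) := mul_le_mul_left h2le4 _
  have hU7 : ∑ i : Fin n, ∑ j : Fin m,
      (‖boxInc X ⟨σ i.castSucc, σ i.succ, τ j.castSucc, τ j.succ⟩‖₊ : ℝ≥0∞) ^ p *
        (‖Y (σ i.succ) (τ j.castSucc) - Y (σ i.castSucc) (τ j.castSucc)‖₊ : ℝ≥0∞) ^ p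
      ≤ 4 ^ p * (A ^ p * B ^ p) := by
    calc _ ≤ cVarPow p X unitRect * (2 * B) ^ p :=
          Tright_le hp0.le X hσ hτ hσ0' hσ1' hτ0' hτ1' _ (2 * B)
            (fun i j => (diff_le_supNormSq (hσmem _) (hτmem _) (hσmem _) (hτmem _)).trans
              (mul_le_mul_right hSY 2))
      _ ≤ A ^ p * (2 * B) ^ p := mul_le_mul_left hVX _
      _ = 2 ^ p * (A ^ p * B ^ p) := by
          rw [ENNReal.mul_rpow_of_nonneg _ _ hp0.le]; ring
      _ ≤ 4 ^ p * (A ^ p * B ^ p) := mul_le_mul_left h2le4 _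
  have hU8 : ∑ i : Fin n, ∑ j : Fin m,
      (‖boxInc X ⟨σ i.castSucc, σ i.succ, τ j.castSucc, τ j.succ⟩‖₊ : ℝ≥0∞) ^ p *
        (‖Y (σ i.castSucc) (τ j.succ) - Y (σ i.castSucc) (τ j.castSucc)‖₊ : ℝ≥0∞) ^ p
      ≤ 4 ^ p * (A ^ p * B ^ p) := by
    calc _ ≤ cVarPow p X unitRect * (2 * B) ^ p :=
          Tright_le hp0.le X hσ hτ hσ0' hσ1' hτ0' hτ1' _ (2 * B)
            (fun i j => (diff_le_supNormSq (hσmem _) (hτmem _) (hσmem _) (hτmem _)).trans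
              (mul_le_mul_right hSY 2))
      _ ≤ A ^ p * (2 * B) ^ p := mul_le_mul_left hVX _
      _ = 2 ^ p * (A ^ p * B ^ p) := by
          rw [ENNReal.mul_rpow_of_nonneg _ _ hp0.le]; ring
      _ ≤ 4 ^ p * (A ^ p * B ^ p) := mul_le_mul_left h2le4 _
  have hU9 : ∑ i : Fin n, ∑ j : Fin m,
      (‖boxInc X ⟨σ i.castSucc, σ i.succ, τ j.castSucc, τ j.succ⟩‖₊ : ℝ≥0∞) ^ p *
        (‖boxInc Y ⟨σ i.castSucc, σ i.succ, τ j.castSucc, τ j.succ⟩‖₊ : ℝ≥0∞) ^ p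
      ≤ 4 ^ p * (A ^ p * B ^ p) := by
    calc _ ≤ cVarPow p X unitRect * (4 * B) ^ p :=
          Tright_le hp0.le X hσ hτ hσ0' hσ1' hτ0' hτ1' _ (4 * B)
            (fun i j => (box_le_supNormSq (hσmem _) (hσmem _) (hτmem _) (hτmem _)).trans
              (mul_le_mul_right hSY 4))
      _ ≤ A ^ p * (4 * B) ^ p := mul_le_mul_left hVX _
      _ = 4 ^ p * (A ^ p * B ^ p) := by
          rw [ENNReal.mul_rpow_of_nonneg _ _ hp0.le]; ring
  calc ∑ i : Fin n, ∑ j : Fin m,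
      (‖boxInc (fun s t => X s t * Y s t)
          ⟨σ i.castSucc, σ i.succ, τ j.castSucc, τ j.succ⟩‖₊ : ℝ≥0∞) ^ p
      ≤ ∑ i : Fin n, ∑ j : Fin m, 9 ^ p * (
        (‖X (σ i.castSucc) (τ j.castSucc)‖₊ : ℝ≥0∞) ^ p *
          (‖boxInc Y ⟨σ i.castSucc, σ i.succ, τ j.castSucc, τ j.succ⟩‖₊ : ℝ≥0∞) ^ p
        + (‖boxInc X ⟨σ i.castSucc, σ i.succ, τ j.castSucc, τ j.succ⟩‖₊ : ℝ≥0∞) ^ p *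
          (‖Y (σ i.castSucc) (τ j.castSucc)‖₊ : ℝ≥0∞) ^ p
        + (‖X (σ i.succ) (τ j.castSucc) - X (σ i.castSucc) (τ j.castSucc)‖₊ : ℝ≥0∞) ^ p *
          (‖Y (σ i.castSucc) (τ j.succ) - Y (σ i.castSucc) (τ j.castSucc)‖₊ : ℝ≥0∞) ^ p
        + (‖X (σ i.castSucc) (τ j.succ) - X (σ i.castSucc) (τ j.castSucc)‖₊ : ℝ≥0∞) ^ p *
          (‖Y (σ i.succ) (τ j.castSucc) - Y (σ i.castSucc) (τ j.castSucc)‖₊ : ℝ≥0∞) ^ p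
        + (‖X (σ i.succ) (τ j.castSucc) - X (σ i.castSucc) (τ j.castSucc)‖₊ : ℝ≥0∞) ^ p *
          (‖boxInc Y ⟨σ i.castSucc, σ i.succ, τ j.castSucc, τ j.succ⟩‖₊ : ℝ≥0∞) ^ p
        + (‖X (σ i.castSucc) (τ j.succ) - X (σ i.castSucc) (τ j.castSucc)‖₊ : ℝ≥0∞) ^ p *
          (‖boxInc Y ⟨σ i.castSucc, σ i.succ, τ j.castSucc, τ j.succ⟩‖₊ : ℝ≥0∞) ^ p
        + (‖boxInc X ⟨σ i.castSucc, σ i.succ, τ j.castSucc, τ j.succ⟩‖₊ : ℝ≥0∞) ^ p *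
          (‖Y (σ i.succ) (τ j.castSucc) - Y (σ i.castSucc) (τ j.castSucc)‖₊ : ℝ≥0∞) ^ p
        + (‖boxInc X ⟨σ i.castSucc, σ i.succ, τ j.castSucc, τ j.succ⟩‖₊ : ℝ≥0∞) ^ p *
          (‖Y (σ i.castSucc) (τ j.succ) - Y (σ i.castSucc) (τ j.castSucc)‖₊ : ℝ≥0∞) ^ p
        + (‖boxInc X ⟨σ i.castSucc, σ i.succ, τ j.castSucc, τ j.succ⟩‖₊ : ℝ≥0∞) ^ p *
          (‖boxInc Y ⟨σ i.castSucc, σ i.succ, τ j.castSucc, τ j.succ⟩‖₊ : ℝ≥0∞) ^ p) :=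
        Finset.sum_le_sum fun i _ => Finset.sum_le_sum fun j _ => hpt i j
    _ ≤ 9 ^ p * (15 * (4 ^ p * (A ^ p * B ^ p))) := by
        simp only [← Finset.mul_sum, Finset.sum_add_distrib]
        refine mul_le_mul_right ?_ _
        refine le_trans (add_le_add (add_le_add (add_le_add (add_le_add (add_le_add
          (add_le_add (add_le_add (add_le_add hU1 hU2) hU3) hU4) hU5) hU6) hU7) hU8) hU9)
          (le_of_eq ?_)
        ring

lemma supNormSq_prod_le (X Y : ℝ → ℝ → ℝ) :
    supNormSq (fun s t => X s t * Y s t) ≤ supNormSq X * supNormSq Y := by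
  refine iSup₂_le fun s hs => iSup₂_le fun t ht => ?_
  rw [mul_nnnorm_ennreal]
  exact mul_le_mul' (le_supNormSq hs ht) (le_supNormSq hs ht)

lemma oneVarPow_prod_base {p : ℝ} (hp : 1 ≤ p) (X Y : ℝ → ℝ → ℝ) :
    oneVarPow p (fun s => X s 0 * Y s 0) 0 1
      ≤ (2 ^ p * 2) * ((cvarNorm p X) ^ p * (cvarNorm p Y) ^ p) := by
  have hp0 : 0 < p := lt_of_lt_of_le one_pos hp
  set A := cvarNorm p X with hA
  set B := cvarNorm p Y with hB
  have hSX : supNormSq X ≤ A := supNormSq_le_cvarNorm X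
  have hSY : supNormSq Y ≤ B := supNormSq_le_cvarNorm Y
  have hHX : oneVarPow p (fun s => X s 0) 0 1 ≤ A ^ p := oneVarPow_base_le_cvarNorm hp0 X
  have hHY : oneVarPow p (fun s => Y s 0) 0 1 ≤ B ^ p := oneVarPow_base_le_cvarNorm hp0 Y
  have h0mem : (0:ℝ) ∈ Set.Icc (0:ℝ) 1 := by norm_num
  rw [oneVarPow]
  refine iSup_le fun k => iSup_le fun r => iSup_le fun hm => iSup_le fun h0 =>
    iSup_le fun h1 => ?_
  have hrmem : ∀ i, r i ∈ Set.Icc (0:ℝ) 1 := pt_mem hm h0 h1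
  have hpt : ∀ i : Fin k,
      (‖X (r i.succ) 0 * Y (r i.succ) 0 - X (r i.castSucc) 0 * Y (r i.castSucc) 0‖₊ : ℝ≥0∞) ^ p
      ≤ 2 ^ p * ((‖X (r i.succ) 0 - X (r i.castSucc) 0‖₊ : ℝ≥0∞) ^ p * B ^ p
          + A ^ p * (‖Y (r i.succ) 0 - Y (r i.castSucc) 0‖₊ : ℝ≥0∞) ^ p) := by
    intro i
    have hdec : X (r i.succ) 0 * Y (r i.succ) 0 - X (r i.castSucc) 0 * Y (r i.castSucc) 0
        = (X (r i.succ) 0 - X (r i.castSucc) 0) * Y (r i.succ) 0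
          + X (r i.castSucc) 0 * (Y (r i.succ) 0 - Y (r i.castSucc) 0) := by ring
    have h2 : (‖X (r i.succ) 0 * Y (r i.succ) 0
          - X (r i.castSucc) 0 * Y (r i.castSucc) 0‖₊ : ℝ≥0∞)
        ≤ (‖X (r i.succ) 0 - X (r i.castSucc) 0‖₊ : ℝ≥0∞) * B
          + A * (‖Y (r i.succ) 0 - Y (r i.castSucc) 0‖₊ : ℝ≥0∞) := by
      rw [hdec]
      refine le_trans (tri_ennreal _ _) ?_
      rw [mul_nnnorm_ennreal, mul_nnnorm_ennreal]
      exact add_le_add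
        (mul_le_mul_right ((le_supNormSq (hrmem _) h0mem).trans hSY) _)
        (mul_le_mul_left ((le_supNormSq (hrmem _) h0mem).trans hSX) _)
    calc (‖X (r i.succ) 0 * Y (r i.succ) 0
          - X (r i.castSucc) 0 * Y (r i.castSucc) 0‖₊ : ℝ≥0∞) ^ p
        ≤ ((‖X (r i.succ) 0 - X (r i.castSucc) 0‖₊ : ℝ≥0∞) * B
          + A * (‖Y (r i.succ) 0 - Y (r i.castSucc) 0‖₊ : ℝ≥0∞)) ^ p :=
          ENNReal.rpow_le_rpow h2 hp0.le
      _ ≤ 2 ^ p * (((‖X (r i.succ) 0 - X (r i.castSucc) 0‖₊ : ℝ≥0∞) * B) ^ p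
          + (A * (‖Y (r i.succ) 0 - Y (r i.castSucc) 0‖₊ : ℝ≥0∞)) ^ p) := two_rpow_le hp _ _
      _ = 2 ^ p * ((‖X (r i.succ) 0 - X (r i.castSucc) 0‖₊ : ℝ≥0∞) ^ p * B ^ p
          + A ^ p * (‖Y (r i.succ) 0 - Y (r i.castSucc) 0‖₊ : ℝ≥0∞) ^ p) := by
          rw [ENNReal.mul_rpow_of_nonneg _ _ hp0.le, ENNReal.mul_rpow_of_nonneg _ _ hp0.le]
  calc ∑ i : Fin k,
      (‖X (r i.succ) 0 * Y (r i.succ) 0 - X (r i.castSucc) 0 * Y (r i.castSucc) 0‖₊ : ℝ≥0∞) ^ p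
      ≤ ∑ i : Fin k, 2 ^ p * ((‖X (r i.succ) 0 - X (r i.castSucc) 0‖₊ : ℝ≥0∞) ^ p * B ^ p
          + A ^ p * (‖Y (r i.succ) 0 - Y (r i.castSucc) 0‖₊ : ℝ≥0∞) ^ p) :=
        Finset.sum_le_sum fun i _ => hpt i
    _ = 2 ^ p * ((∑ i : Fin k, (‖X (r i.succ) 0 - X (r i.castSucc) 0‖₊ : ℝ≥0∞) ^ p) * B ^ p
          + A ^ p * ∑ i : Fin k, (‖Y (r i.succ) 0 - Y (r i.castSucc) 0‖₊ : ℝ≥0∞) ^ p) := by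
        rw [← Finset.mul_sum, Finset.sum_add_distrib, ← Finset.sum_mul, ← Finset.mul_sum]
    _ ≤ 2 ^ p * ((A ^ p) * B ^ p + A ^ p * (B ^ p)) := by
        gcongr
        · exact (sum_le_oneVarPow hm h0 h1).trans hHX
        · exact (sum_le_oneVarPow hm h0 h1).trans hHY
    _ = (2 ^ p * 2) * (A ^ p * B ^ p) := by ring

lemma oneVarPow_prod_side {p : ℝ} (hp : 1 ≤ p) (X Y : ℝ → ℝ → ℝ) :
    oneVarPow p (fun t => X 0 t * Y 0 t) 0 1
      ≤ (2 ^ p * 2) * ((cvarNorm p X) ^ p * (cvarNorm p Y) ^ p) := by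
  have hp0 : 0 < p := lt_of_lt_of_le one_pos hp
  set A := cvarNorm p X with hA
  set B := cvarNorm p Y with hB
  have hSX : supNormSq X ≤ A := supNormSq_le_cvarNorm X
  have hSY : supNormSq Y ≤ B := supNormSq_le_cvarNorm Y
  have hHX : oneVarPow p (fun t => X 0 t) 0 1 ≤ A ^ p := oneVarPow_side_le_cvarNorm hp0 X
  have hHY : oneVarPow p (fun t => Y 0 t) 0 1 ≤ B ^ p := oneVarPow_side_le_cvarNorm hp0 Y
  have h0mem : (0:ℝ) ∈ Set.Icc (0:ℝ) 1 := by norm_num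
  rw [oneVarPow]
  refine iSup_le fun k => iSup_le fun r => iSup_le fun hm => iSup_le fun h0 =>
    iSup_le fun h1 => ?_
  have hrmem : ∀ i, r i ∈ Set.Icc (0:ℝ) 1 := pt_mem hm h0 h1
  have hpt : ∀ i : Fin k,
      (‖X 0 (r i.succ) * Y 0 (r i.succ) - X 0 (r i.castSucc) * Y 0 (r i.castSucc)‖₊ : ℝ≥0∞) ^ p
      ≤ 2 ^ p * ((‖X 0 (r i.succ) - X 0 (r i.castSucc)‖₊ : ℝ≥0∞) ^ p * B ^ p
          + A ^ p * (‖Y 0 (r i.succ) - Y 0 (r i.castSucc)‖₊ : ℝ≥0∞) ^ p) := by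
    intro i
    have hdec : X 0 (r i.succ) * Y 0 (r i.succ) - X 0 (r i.castSucc) * Y 0 (r i.castSucc)
        = (X 0 (r i.succ) - X 0 (r i.castSucc)) * Y 0 (r i.succ)
          + X 0 (r i.castSucc) * (Y 0 (r i.succ) - Y 0 (r i.castSucc)) := by ring
    have h2 : (‖X 0 (r i.succ) * Y 0 (r i.succ)
          - X 0 (r i.castSucc) * Y 0 (r i.castSucc)‖₊ : ℝ≥0∞)
        ≤ (‖X 0 (r i.succ) - X 0 (r i.castSucc)‖₊ : ℝ≥0∞) * B
          + A * (‖Y 0 (r i.succ) - Y 0 (r i.castSucc)‖₊ : ℝ≥0∞) := by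
      rw [hdec]
      refine le_trans (tri_ennreal _ _) ?_
      rw [mul_nnnorm_ennreal, mul_nnnorm_ennreal]
      exact add_le_add
        (mul_le_mul_right ((le_supNormSq h0mem (hrmem _)).trans hSY) _)
        (mul_le_mul_left ((le_supNormSq h0mem (hrmem _)).trans hSX) _)
    calc (‖X 0 (r i.succ) * Y 0 (r i.succ)
          - X 0 (r i.castSucc) * Y 0 (r i.castSucc)‖₊ : ℝ≥0∞) ^ p
        ≤ ((‖X 0 (r i.succ) - X 0 (r i.castSucc)‖₊ : ℝ≥0∞) * B
          + A * (‖Y 0 (r i.succ) - Y 0 (r i.castSucc)‖₊ : ℝ≥0∞)) ^ p :=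
          ENNReal.rpow_le_rpow h2 hp0.le
      _ ≤ 2 ^ p * (((‖X 0 (r i.succ) - X 0 (r i.castSucc)‖₊ : ℝ≥0∞) * B) ^ p
          + (A * (‖Y 0 (r i.succ) - Y 0 (r i.castSucc)‖₊ : ℝ≥0∞)) ^ p) := two_rpow_le hp _ _
      _ = 2 ^ p * ((‖X 0 (r i.succ) - X 0 (r i.castSucc)‖₊ : ℝ≥0∞) ^ p * B ^ p
          + A ^ p * (‖Y 0 (r i.succ) - Y 0 (r i.castSucc)‖₊ : ℝ≥0∞) ^ p) := by
          rw [ENNReal.mul_rpow_of_nonneg _ _ hp0.le, ENNReal.mul_rpow_of_nonneg _ _ hp0.le]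
  calc ∑ i : Fin k,
      (‖X 0 (r i.succ) * Y 0 (r i.succ) - X 0 (r i.castSucc) * Y 0 (r i.castSucc)‖₊ : ℝ≥0∞) ^ p
      ≤ ∑ i : Fin k, 2 ^ p * ((‖X 0 (r i.succ) - X 0 (r i.castSucc)‖₊ : ℝ≥0∞) ^ p * B ^ p
          + A ^ p * (‖Y 0 (r i.succ) - Y 0 (r i.castSucc)‖₊ : ℝ≥0∞) ^ p) :=
        Finset.sum_le_sum fun i _ => hpt i
    _ = 2 ^ p * ((∑ i : Fin k, (‖X 0 (r i.succ) - X 0 (r i.castSucc)‖₊ : ℝ≥0∞) ^ p) * B ^ p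
          + A ^ p * ∑ i : Fin k, (‖Y 0 (r i.succ) - Y 0 (r i.castSucc)‖₊ : ℝ≥0∞) ^ p) := by
        rw [← Finset.mul_sum, Finset.sum_add_distrib, ← Finset.sum_mul, ← Finset.mul_sum]
    _ ≤ 2 ^ p * ((A ^ p) * B ^ p + A ^ p * (B ^ p)) := by
        gcongr
        · exact (sum_le_oneVarPow hm h0 h1).trans hHX
        · exact (sum_le_oneVarPow hm h0 h1).trans hHY
    _ = (2 ^ p * 2) * (A ^ p * B ^ p) := by ring
/-- For `p ≥ 1` there is a constant `C > 0`, depending only on `p`, such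
that for all continuous `X, Y : [0,1]² → ℝ` of finite controlled `p`-variation norm, the
pointwise product `Z = X·Y` satisfies `‖Z‖_{p-var} ≤ C·‖X‖_{p-cvar}·‖Y‖_{p-cvar}`
(in `ℝ≥0∞`; in particular `Z` has finite `p`-variation norm). -/
theorem product_varNorm_le
    (p : ℝ) (hp : 1 ≤ p) :
    ∃ C : ℝ, 0 < C ∧ ∀ X Y : ℝ → ℝ → ℝ,
      ContinuousOn (fun z : ℝ × ℝ => X z.1 z.2) (Set.Icc 0 1 ×ˢ Set.Icc 0 1) →
      ContinuousOn (fun z : ℝ × ℝ => Y z.1 z.2) (Set.Icc 0 1 ×ˢ Set.Icc 0 1) →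
      cvarNorm p X ≠ ⊤ → cvarNorm p Y ≠ ⊤ →
      varNorm p (fun s t => X s t * Y s t) ≤
        ENNReal.ofReal C * cvarNorm p X * cvarNorm p Y := by
  have hp0 : 0 < p := lt_of_lt_of_le one_pos hp
  set c1 : ℝ≥0∞ := 2 ^ p * 2 with hc1
  set c2 : ℝ≥0∞ := 9 ^ p * (15 * 4 ^ p) with hc2
  set D : ℝ≥0∞ := 1 + (c1 + c1 + c2) with hD
  have h2top : (2:ℝ≥0∞) ^ p ≠ ⊤ :=
    (ENNReal.rpow_lt_top_of_nonneg hp0.le (by norm_num)).ne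
  have h9top : (9:ℝ≥0∞) ^ p ≠ ⊤ :=
    (ENNReal.rpow_lt_top_of_nonneg hp0.le (by norm_num)).ne
  have h4top : (4:ℝ≥0∞) ^ p ≠ ⊤ :=
    (ENNReal.rpow_lt_top_of_nonneg hp0.le (by norm_num)).ne
  have hc1top : c1 ≠ ⊤ := ENNReal.mul_ne_top h2top (by norm_num)
  have hc2top : c2 ≠ ⊤ := ENNReal.mul_ne_top h9top (ENNReal.mul_ne_top (by norm_num) h4top)
  have hDtop : D ≠ ⊤ := by
    rw [hD]
    exact ENNReal.add_ne_top.mpr ⟨ENNReal.one_ne_top,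
      ENNReal.add_ne_top.mpr ⟨ENNReal.add_ne_top.mpr ⟨hc1top, hc1top⟩, hc2top⟩⟩
  have hD1 : (1:ℝ≥0∞) ≤ D := le_self_add
  have hD0 : D ≠ 0 := fun h => by simp [h] at hD1
  have h1le2p : (1:ℝ≥0∞) ≤ 2 ^ p := by
    calc (1:ℝ≥0∞) = 1 ^ p := (ENNReal.one_rpow p).symm
    _ ≤ 2 ^ p := ENNReal.rpow_le_rpow (by norm_num) hp0.le
  have h1le9p : (1:ℝ≥0∞) ≤ 9 ^ p := by
    calc (1:ℝ≥0∞) = 1 ^ p := (ENNReal.one_rpow p).symm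
    _ ≤ 9 ^ p := ENNReal.rpow_le_rpow (by norm_num) hp0.le
  have h1le4p : (1:ℝ≥0∞) ≤ 4 ^ p := by
    calc (1:ℝ≥0∞) = 1 ^ p := (ENNReal.one_rpow p).symm
    _ ≤ 4 ^ p := ENNReal.rpow_le_rpow (by norm_num) hp0.le
  have hc1ge : (1:ℝ≥0∞) ≤ c1 := by
    calc (1:ℝ≥0∞) = 1 * 1 := by norm_num
    _ ≤ 2 ^ p * 2 := mul_le_mul' h1le2p (by norm_num)
  have hc2ge : (1:ℝ≥0∞) ≤ c2 := by
    calc (1:ℝ≥0∞) = 1 * (1 * 1) := by norm_num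
    _ ≤ 9 ^ p * (15 * 4 ^ p) := mul_le_mul' h1le9p (mul_le_mul' (by norm_num) h1le4p)
  have hcle : ∀ c : ℝ≥0∞, 1 ≤ c → c ^ (1/p) ≤ c := fun c h1 => by
    calc c ^ (1/p) ≤ c ^ (1:ℝ) :=
      ENNReal.rpow_le_rpow_of_exponent_le h1 ((div_le_one hp0).mpr hp)
    _ = c := ENNReal.rpow_one c
  refine ⟨D.toReal, ENNReal.toReal_pos hD0 hDtop, ?_⟩
  intro X Y _ _ _ _
  set A := cvarNorm p X with hA
  set B := cvarNorm p Y with hB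
  have hroot : ∀ c : ℝ≥0∞, (c * (A ^ p * B ^ p)) ^ (1/p) = c ^ (1/p) * (A * B) := by
    intro c
    rw [ENNReal.mul_rpow_of_nonneg _ _ (by positivity : (0:ℝ) ≤ 1/p),
      ENNReal.mul_rpow_of_nonneg _ _ (by positivity : (0:ℝ) ≤ 1/p),
      ← ENNReal.rpow_mul A, ← ENNReal.rpow_mul B, mul_one_div_cancel hp0.ne',
      ENNReal.rpow_one, ENNReal.rpow_one]
  have hSX : supNormSq X ≤ A := supNormSq_le_cvarNorm X
  have hSY : supNormSq Y ≤ B := supNormSq_le_cvarNorm Y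
  have hs : supNormSq (fun s t => X s t * Y s t) ≤ A * B :=
    (supNormSq_prod_le X Y).trans (mul_le_mul' hSX hSY)
  have hu : oneVar p (fun s => X s 0 * Y s 0) 0 1 ≤ c1 * (A * B) := by
    calc oneVar p (fun s => X s 0 * Y s 0) 0 1
        = (oneVarPow p (fun s => X s 0 * Y s 0) 0 1) ^ (1/p) := rfl
      _ ≤ (c1 * (A ^ p * B ^ p)) ^ (1/p) :=
          ENNReal.rpow_le_rpow (oneVarPow_prod_base hp X Y) (by positivity)
      _ = c1 ^ (1/p) * (A * B) := hroot c1
      _ ≤ c1 * (A * B) := mul_le_mul_left (hcle c1 hc1ge) _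
  have hv : oneVar p (fun t => X 0 t * Y 0 t) 0 1 ≤ c1 * (A * B) := by
    calc oneVar p (fun t => X 0 t * Y 0 t) 0 1
        = (oneVarPow p (fun t => X 0 t * Y 0 t) 0 1) ^ (1/p) := rfl
      _ ≤ (c1 * (A ^ p * B ^ p)) ^ (1/p) :=
          ENNReal.rpow_le_rpow (oneVarPow_prod_side hp X Y) (by positivity)
      _ = c1 ^ (1/p) * (A * B) := hroot c1
      _ ≤ c1 * (A * B) := mul_le_mul_left (hcle c1 hc1ge) _
  have hw : gridVar p (fun s t => X s t * Y s t) unitRect ≤ c2 * (A * B) := by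
    have hgb : gridVarPow p (fun s t => X s t * Y s t) unitRect ≤ c2 * (A ^ p * B ^ p) := by
      refine (gridVarPow_prod_le hp X Y).trans (le_of_eq ?_)
      rw [hc2]; ring
    calc gridVar p (fun s t => X s t * Y s t) unitRect
        = (gridVarPow p (fun s t => X s t * Y s t) unitRect) ^ (1/p) := rfl
      _ ≤ (c2 * (A ^ p * B ^ p)) ^ (1/p) := ENNReal.rpow_le_rpow hgb (by positivity)
      _ = c2 ^ (1/p) * (A * B) := hroot c2
      _ ≤ c2 * (A * B) := mul_le_mul_left (hcle c2 hc2ge) _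
  calc varNorm p (fun s t => X s t * Y s t)
      = supNormSq (fun s t => X s t * Y s t)
        + oneVar p (fun s => X s 0 * Y s 0) 0 1
        + oneVar p (fun t => X 0 t * Y 0 t) 0 1
        + gridVar p (fun s t => X s t * Y s t) unitRect := rfl
    _ ≤ A * B + c1 * (A * B) + c1 * (A * B) + c2 * (A * B) :=
        add_le_add (add_le_add (add_le_add hs hu) hv) hw
    _ = D * (A * B) := by rw [hD]; ring
    _ = ENNReal.ofReal D.toReal * A * B := by
        rw [ENNReal.ofReal_toReal hDtop, mul_assoc]
end
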